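/- arXiv:1906.09129 — 10 statements merged into one kernel-verified Lean document; each statement's English description precedes it below -/
import Mathlib

section
/- Let (z_n) and (w_n) be sequences in a Banach space X and let (α_n) be a sequence in [0,1] such that limsup α_n < 1. Suppose that z_{n+1} = α_n w_n + (1 − α_n) z_n for all n ∈ ℕ, that limsup(‖w_{n+1} − w_n‖ − ‖z_{n+1} − z_n‖) ≤ 0, and that d := limsup ‖w_n − z_n‖ is finite (i.e. the sequence (‖w_n − z_n‖) is bounded). Then for every t ∈ ℕ, liminf_{n→∞} | ‖w_{n+t} − z_n‖ − (1 + α_n + α_{n+1} + ⋯ + α_{n+t−1}) d | = 0. -/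
open Filter Finset

lemma suzuki_partition (β : ℕ → ℝ) (k : ℕ) :
    (∏ i ∈ Finset.range k, (1 - β i))
      + ∑ j ∈ Finset.range k, β j * ∏ i ∈ Finset.Ico (j+1) k, (1 - β i) = 1 := by
  induction k with
  | zero => simp
  | succ k ih =>
    rw [Finset.prod_range_succ, Finset.sum_range_succ]
    have hs : ∀ j ∈ Finset.range k,
        β j * ∏ i ∈ Finset.Ico (j+1) (k+1), (1 - β i)
          = (1 - β k) * (β j * ∏ i ∈ Finset.Ico (j+1) k, (1 - β i)) := by
      intro j hj
      rw [Finset.prod_Ico_succ_top (Nat.succ_le_of_lt (Finset.mem_range.mp hj))]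
      ring
    rw [Finset.sum_congr rfl hs, ← Finset.mul_sum]
    simp only [Finset.Ico_self, Finset.prod_empty, mul_one]
    linear_combination (1 - β k) * ih

lemma suzuki_ident (β : ℕ → ℝ) (k : ℕ) :
    (∏ i ∈ Finset.range k, (1 - β i)) * (1 + ∑ i ∈ Finset.range k, β i)
      + ∑ j ∈ Finset.range k, (β j * ∏ i ∈ Finset.Ico (j+1) k, (1 - β i))
          * (∑ i ∈ Finset.Ico j k, β i) = 1 := by
  induction k with
  | zero => simp
  | succ k ih =>
    have hpart := suzuki_partition β k
    rw [Finset.prod_range_succ, Finset.sum_range_succ,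
      Finset.sum_range_succ (fun j => (β j * ∏ i ∈ Finset.Ico (j+1) (k+1), (1 - β i))
        * (∑ i ∈ Finset.Ico j (k+1), β i))]
    have hs : ∀ j ∈ Finset.range k,
        (β j * ∏ i ∈ Finset.Ico (j+1) (k+1), (1 - β i)) * (∑ i ∈ Finset.Ico j (k+1), β i)
          = (1 - β k) * ((β j * ∏ i ∈ Finset.Ico (j+1) k, (1 - β i)) * (∑ i ∈ Finset.Ico j k, β i))
            + ((1 - β k) * β k) * (β j * ∏ i ∈ Finset.Ico (j+1) k, (1 - β i)) := by
      intro j hj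
      have hjk := Finset.mem_range.mp hj
      rw [Finset.prod_Ico_succ_top (Nat.succ_le_of_lt hjk),
        Finset.sum_Ico_succ_top (le_of_lt hjk)]
      ring
    rw [Finset.sum_congr rfl hs, Finset.sum_add_distrib, ← Finset.mul_sum, ← Finset.mul_sum]
    simp only [Finset.Ico_self, Finset.prod_empty, mul_one, Nat.Ico_succ_singleton,
      Finset.sum_singleton]
    linear_combination (1 - β k) * ih + ((1 - β k) * β k) * hpart

lemma suzuki_decomp {X : Type*} [NormedAddCommGroup X] [NormedSpace ℝ X]
    (z w : ℕ → X) (α : ℕ → ℝ)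
    (hrec : ∀ n, z (n+1) = α n • w n + (1 - α n) • z n) (n k : ℕ) :
    z (n+k) = (∏ i ∈ Finset.range k, (1 - α (n+i))) • z n
      + ∑ j ∈ Finset.range k, (α (n+j) * ∏ i ∈ Finset.Ico (j+1) k, (1 - α (n+i))) • w (n+j) := by
  induction k with
  | zero => simp
  | succ k ih =>
    rw [show n + (k+1) = (n+k)+1 from rfl, hrec, ih]
    rw [Finset.prod_range_succ, Finset.sum_range_succ]
    have hs : ∀ j ∈ Finset.range k,
        (α (n+j) * ∏ i ∈ Finset.Ico (j+1) (k+1), (1 - α (n+i))) • w (n+j)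
          = (1 - α (n+k)) • ((α (n+j) * ∏ i ∈ Finset.Ico (j+1) k, (1 - α (n+i))) • w (n+j)) := by
      intro j hj
      rw [Finset.prod_Ico_succ_top (Nat.succ_le_of_lt (Finset.mem_range.mp hj)), smul_smul]
      congr 1
      ring
    rw [Finset.sum_congr rfl hs, ← Finset.smul_sum]
    simp only [Finset.Ico_self, Finset.prod_empty, mul_one]
    module

set_option maxHeartbeats 1000000 in
/-- Suzuki's Lemma 2.1 (Lemma 3.2 in the paper): if `z_{n+1} = α_n w_n + (1-α_n) z_n`,
`limsup α_n < 1`, `limsup (‖w_{n+1}-w_n‖ - ‖z_{n+1}-z_n‖) ≤ 0` and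
`d := limsup ‖w_n - z_n‖` is finite, then for every `t`,
`liminf |‖w_{n+t} - z_n‖ - (1 + α_n + ⋯ + α_{n+t-1}) d| = 0`. -/
theorem suzuki_lemma_one
    {X : Type*} [NormedAddCommGroup X] [NormedSpace ℝ X] [CompleteSpace X]
    (z w : ℕ → X) (α : ℕ → ℝ)
    (hα : ∀ n, α n ∈ Set.Icc (0:ℝ) 1)
    (hαlimsup : Filter.limsup α Filter.atTop < 1)
    (hrec : ∀ n, z (n+1) = α n • w n + (1 - α n) • z n)
    (hdiff : ∀ ε : ℝ, 0 < ε → ∃ N : ℕ, ∀ n ≥ N,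
      ‖w (n+1) - w n‖ - ‖z (n+1) - z n‖ ≤ ε)
    (hbdd : ∃ C : ℝ, ∀ n, ‖w n - z n‖ ≤ C) :
    ∀ t : ℕ,
      Filter.liminf
        (fun n => |‖w (n+t) - z n‖ -
          (1 + ∑ i ∈ Finset.range t, α (n+i)) *
            Filter.limsup (fun m => ‖w m - z m‖) Filter.atTop|)
        Filter.atTop = 0 := by
  intro k
  obtain ⟨C, hC⟩ := hbdd
  have hC0 : (0:ℝ) ≤ C := le_trans (norm_nonneg _) (hC 0)
  set d := Filter.limsup (fun m => ‖w m - z m‖) Filter.atTop with hd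
  -- basic boundedness facts
  have hub : Filter.IsBoundedUnder (· ≤ ·) Filter.atTop (fun m => ‖w m - z m‖) :=
    Filter.isBoundedUnder_of ⟨C, hC⟩
  have hlb : Filter.IsBoundedUnder (· ≥ ·) Filter.atTop (fun m => ‖w m - z m‖) :=
    Filter.isBoundedUnder_of ⟨0, fun m => norm_nonneg _⟩
  have hd0 : 0 ≤ d :=
    Filter.le_limsup_of_frequently_le (Filter.Frequently.of_forall fun m => norm_nonneg _) hub
  have hfub : ∀ ε : ℝ, 0 < ε → ∃ N, ∀ m ≥ N, ‖w m - z m‖ ≤ d + ε := by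
    intro ε hε
    have h := Filter.eventually_lt_of_limsup_lt
      (show Filter.limsup (fun m => ‖w m - z m‖) Filter.atTop < d + ε by rw [← hd]; linarith) hub
    rw [Filter.eventually_atTop] at h
    obtain ⟨N, hN⟩ := h
    exact ⟨N, fun m hm => (hN m hm).le⟩
  have hnot : ∀ δ : ℝ, 0 < δ → ¬ ∃ N, ∀ m ≥ N, ‖w m - z m‖ ≤ d - δ := by
    rintro δ hδ ⟨N, hN⟩
    have h : Filter.limsup (fun m => ‖w m - z m‖) Filter.atTop ≤ d - δ :=
      Filter.limsup_le_of_le hlb.isCoboundedUnder_le (Filter.eventually_atTop.2 ⟨N, hN⟩)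
    rw [← hd] at h
    linarith
  -- facts about α
  have hαub : Filter.IsBoundedUnder (· ≤ ·) Filter.atTop α :=
    Filter.isBoundedUnder_of ⟨1, fun n => (hα n).2⟩
  have hαl0 : 0 ≤ Filter.limsup α Filter.atTop :=
    Filter.le_limsup_of_frequently_le (Filter.Frequently.of_forall fun n => (hα n).1) hαub
  set a : ℝ := (Filter.limsup α Filter.atTop + 1) / 2 with ha
  have ha1 : a < 1 := by rw [ha]; linarith
  have ha0 : 0 ≤ a := by rw [ha]; linarith
  obtain ⟨Na, hNa⟩ : ∃ N, ∀ n ≥ N, α n ≤ a := by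
    have h := Filter.eventually_lt_of_limsup_lt
      (show Filter.limsup α Filter.atTop < a by rw [ha]; linarith) hαub
    rw [Filter.eventually_atTop] at h
    obtain ⟨N, hN⟩ := h
    exact ⟨N, fun n hn => (hN n hn).le⟩
  -- norms of z-increments
  have hznorm : ∀ m, ‖z (m+1) - z m‖ = α m * ‖w m - z m‖ := by
    intro m
    have hzd : z (m+1) - z m = α m • (w m - z m) := by rw [hrec]; module
    rw [hzd, norm_smul, Real.norm_of_nonneg (hα m).1]
  have hztele : ∀ n K, ‖z (n+K) - z n‖ ≤ ∑ i ∈ Finset.range K, α (n+i) * ‖w (n+i) - z (n+i)‖ := by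
    intro n K
    induction K with
    | zero => simp
    | succ K ih =>
      rw [Finset.sum_range_succ]
      have h1 : ‖z (n+(K+1)) - z n‖ ≤ ‖z (n+(K+1)) - z (n+K)‖ + ‖z (n+K) - z n‖ :=
        norm_sub_le_norm_sub_add_norm_sub _ _ _
      have h2 : ‖z (n+(K+1)) - z (n+K)‖ = α (n+K) * ‖w (n+K) - z (n+K)‖ := hznorm (n+K)
      linarith
  -- the key frequently-small claim
  have key : ∀ ε : ℝ, 0 < ε → ∃ᶠ n in Filter.atTop,
      |‖w (n+k) - z n‖ - (1 + ∑ i ∈ Finset.range k, α (n+i)) * d| ≤ ε := by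
    intro ε hε
    set p : ℝ := (1 - a)^k with hpdef
    have hp : 0 < p := pow_pos (by linarith) k
    have hp1 : p ≤ 1 := pow_le_one₀ (by linarith) (by linarith)
    set D : ℝ := ((k:ℝ)+1)*(2*(k:ℝ)+1)+1 with hDdef
    have hD : 0 < D := by positivity
    set ε' : ℝ := p * ε / D with hε'def
    have hε' : 0 < ε' := by positivity
    have hk0 : (0:ℝ) ≤ (k:ℝ) := Nat.cast_nonneg k
    have hkey1 : ((k:ℝ)+1) * ε' ≤ ε := by
      have hpD : ((k:ℝ)+1) * p ≤ D := by nlinarith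
      calc ((k:ℝ)+1) * ε' = (((k:ℝ)+1) * p) * (ε / D) := by rw [hε'def]; ring
        _ ≤ D * (ε / D) := mul_le_mul_of_nonneg_right hpD (by positivity)
        _ = ε := by field_simp
    have hkey2 : 2*(k:ℝ)*ε' < p*ε := by
      have h2k : 2*(k:ℝ) < D := by nlinarith
      calc 2*(k:ℝ)*ε' = (2*(k:ℝ)) * ((p*ε) / D) := by rw [hε'def]
        _ < D * ((p*ε) / D) := mul_lt_mul_of_pos_right h2k (by positivity)
        _ = p*ε := by field_simp
    set δ : ℝ := p*ε - 2*(k:ℝ)*ε' with hδdef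
    have hδ : 0 < δ := by rw [hδdef]; linarith
    obtain ⟨N₂, hN₂⟩ := hdiff ε' hε'
    obtain ⟨N₃, hN₃⟩ := hfub ε' hε'
    set N : ℕ := max (max Na N₂) N₃ with hNdef
    -- telescoping for w beyond N₂
    have hwnorm : ∀ m ≥ N₂, ‖w (m+1) - w m‖ ≤ α m * ‖w m - z m‖ + ε' := by
      intro m hm
      have h := hN₂ m hm
      rw [← hznorm m]
      linarith
    have hwtele : ∀ n ≥ N₂, ∀ j K, j ≤ K →
        ‖w (n+K) - w (n+j)‖ ≤ ∑ i ∈ Finset.Ico j K, (α (n+i) * ‖w (n+i) - z (n+i)‖ + ε') := by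
      intro n hn j K hjK
      induction K, hjK using Nat.le_induction with
      | base => simp
      | succ K hK ih =>
        rw [Finset.sum_Ico_succ_top hK]
        have h1 : ‖w (n+K+1) - w (n+j)‖ ≤ ‖w (n+K+1) - w (n+K)‖ + ‖w (n+K) - w (n+j)‖ :=
          norm_sub_le_norm_sub_add_norm_sub _ _ _
        have h2 : ‖w (n+K+1) - w (n+K)‖ ≤ α (n+K) * ‖w (n+K) - z (n+K)‖ + ε' :=
          hwnorm (n+K) (le_trans hn (Nat.le_add_right n K))
        show ‖w (n+K+1) - w (n+j)‖ ≤ _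
        linarith
    -- eventual upper bound
    have hupper : ∀ n ≥ N, ‖w (n+k) - z n‖ - (1 + ∑ i ∈ Finset.range k, α (n+i)) * d ≤ ε := by
      intro n hn
      have hnN₃ : N₃ ≤ n := le_trans (le_max_right _ _) hn
      set S : ℝ := ∑ i ∈ Finset.range k, α (n+i) with hSdef
      have hS0 : 0 ≤ S := Finset.sum_nonneg fun i _ => (hα _).1
      have hSk : S ≤ (k:ℝ) := by
        calc S ≤ ∑ i ∈ Finset.range k, (1:ℝ) := Finset.sum_le_sum fun i _ => (hα _).2
          _ = (k:ℝ) := by simp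
      have h1 : ‖w (n+k) - z n‖ ≤ ‖w (n+k) - z (n+k)‖ + ‖z (n+k) - z n‖ :=
        norm_sub_le_norm_sub_add_norm_sub _ _ _
      have h2 := hztele n k
      have h3 : ∑ i ∈ Finset.range k, α (n+i) * ‖w (n+i) - z (n+i)‖
          ≤ ∑ i ∈ Finset.range k, α (n+i) * (d + ε') := by
        refine Finset.sum_le_sum fun i _ => ?_
        exact mul_le_mul_of_nonneg_left (hN₃ (n+i) (by omega)) (hα _).1
      have h4 : ‖w (n+k) - z (n+k)‖ ≤ d + ε' := hN₃ (n+k) (by omega)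
      have h5 : ∑ i ∈ Finset.range k, α (n+i) * (d + ε') = S * (d + ε') := by
        rw [hSdef, Finset.sum_mul]
      have h6 : S * ε' ≤ (k:ℝ) * ε' := mul_le_mul_of_nonneg_right hSk hε'.le
      nlinarith [hkey1]
    -- frequent lower bound via contradiction
    have hlow : ∃ᶠ n in Filter.atTop,
        -ε < ‖w (n+k) - z n‖ - (1 + ∑ i ∈ Finset.range k, α (n+i)) * d := by
      by_contra hcon
      rw [Filter.not_frequently] at hcon
      have hcon' : ∀ᶠ n in Filter.atTop,
          ‖w (n+k) - z n‖ ≤ (1 + ∑ i ∈ Finset.range k, α (n+i)) * d - ε := by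
        refine hcon.mono fun n h => ?_
        push_neg at h
        linarith
      rw [Filter.eventually_atTop] at hcon'
      obtain ⟨m₀, hm₀⟩ := hcon'
      set M : ℕ := max m₀ N with hMdef
      have hmain : ∀ n ≥ M, ‖w (n+k) - z (n+k)‖ ≤ d - δ := by
        intro n hn
        have hnN : N ≤ n := le_trans (le_max_right _ _) hn
        have hnN₂ : N₂ ≤ n := le_trans (le_trans (le_max_right _ _) (le_max_left _ _)) hnN
        have hnN₃ : N₃ ≤ n := le_trans (le_max_right _ _) hnN
        have hnNa : Na ≤ n := le_trans (le_trans (le_max_left _ _) (le_max_left _ _)) hnN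
        set S : ℝ := ∑ i ∈ Finset.range k, α (n+i) with hSdef
        set P : ℝ := ∏ i ∈ Finset.range k, (1 - α (n+i)) with hPdef
        have hPp : p ≤ P := by
          have h1 : ((1:ℝ) - a)^k = ∏ _i ∈ Finset.range k, (1 - a) := by
            rw [Finset.prod_const, Finset.card_range]
          rw [hpdef, h1, hPdef]
          refine Finset.prod_le_prod (fun i _ => by linarith) (fun i _ => ?_)
          have := hNa (n+i) (by omega)
          linarith
        have hP0 : 0 ≤ P := le_trans hp.le hPp
        set c : ℕ → ℝ := fun j => α (n+j) * ∏ i ∈ Finset.Ico (j+1) k, (1 - α (n+i)) with hcdef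
        have hc0 : ∀ j ∈ Finset.range k, 0 ≤ c j := by
          intro j _
          refine mul_nonneg (hα _).1 (Finset.prod_nonneg fun i _ => ?_)
          linarith [(hα (n+i)).2]
        have hcsum : P + ∑ j ∈ Finset.range k, c j = 1 := by
          have h := suzuki_partition (fun i => α (n+i)) k
          simpa [hPdef, hcdef] using h
        have hvec : w (n+k) - z (n+k)
            = P • (w (n+k) - z n) + ∑ j ∈ Finset.range k, c j • (w (n+k) - w (n+j)) := by
          have hdec := suzuki_decomp z w α hrec n k
          have h1 : ∑ j ∈ Finset.range k, c j • (w (n+k) - w (n+j))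
              = (∑ j ∈ Finset.range k, c j) • w (n+k) - ∑ j ∈ Finset.range k, c j • w (n+j) := by
            simp only [smul_sub, Finset.sum_sub_distrib, Finset.sum_smul]
          have h2 : (∑ j ∈ Finset.range k, c j) = 1 - P := by linarith
          rw [h1, h2, hdec]
          simp only [hcdef, hPdef]
          module
        have hnorm : ‖w (n+k) - z (n+k)‖
            ≤ P * ‖w (n+k) - z n‖ + ∑ j ∈ Finset.range k, c j * ‖w (n+k) - w (n+j)‖ := by
          rw [hvec]
          refine (norm_add_le _ _).trans (add_le_add ?_ ?_)
          · rw [norm_smul, Real.norm_of_nonneg hP0]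
          · refine (norm_sum_le _ _).trans (le_of_eq (Finset.sum_congr rfl fun j hj => ?_))
            rw [norm_smul, Real.norm_of_nonneg (hc0 j hj)]
        have hwj : ∀ j ∈ Finset.range k, ‖w (n+k) - w (n+j)‖
            ≤ (∑ i ∈ Finset.Ico j k, α (n+i)) * d + 2*(k:ℝ)*ε' := by
          intro j hj
          have hjk := Finset.mem_range.mp hj
          have ht := hwtele n hnN₂ j k hjk.le
          set T : ℝ := ∑ i ∈ Finset.Ico j k, α (n+i) with hTdef
          have hT0 : 0 ≤ T := Finset.sum_nonneg fun i _ => (hα _).1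
          have hTk : T ≤ (k:ℝ) := by
            calc T ≤ ∑ i ∈ Finset.Ico j k, (1:ℝ) := Finset.sum_le_sum fun i _ => (hα _).2
              _ = ((k - j : ℕ) : ℝ) := by simp
              _ ≤ (k:ℝ) := by exact_mod_cast Nat.cast_le.mpr (Nat.sub_le k j)
          have h3 : ∑ i ∈ Finset.Ico j k, (α (n+i) * ‖w (n+i) - z (n+i)‖ + ε')
              ≤ ∑ i ∈ Finset.Ico j k, (α (n+i) * (d + ε') + ε') := by
            refine Finset.sum_le_sum fun i _ => ?_
            have := hN₃ (n+i) (by omega)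
            have := mul_le_mul_of_nonneg_left this (hα (n+i)).1
            linarith
          have h4 : ∑ i ∈ Finset.Ico j k, (α (n+i) * (d + ε') + ε')
              = T * (d + ε') + ((k - j : ℕ) : ℝ) * ε' := by
            rw [Finset.sum_add_distrib, ← Finset.sum_mul, Finset.sum_const, nsmul_eq_mul]
            simp [hTdef]
          have h5 : ((k - j : ℕ) : ℝ) ≤ (k:ℝ) := by exact_mod_cast Nat.cast_le.mpr (Nat.sub_le k j)
          have h6 : T * ε' ≤ (k:ℝ) * ε' := mul_le_mul_of_nonneg_right hTk hε'.le
          have h7 : ((k - j : ℕ) : ℝ) * ε' ≤ (k:ℝ) * ε' := mul_le_mul_of_nonneg_right h5 hε'.le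
          have h8 : T*(d+ε') = T*d + T*ε' := by ring
          linarith
        have hEn : ‖w (n+k) - z n‖ ≤ (1 + S) * d - ε :=
          hm₀ n (le_trans (le_max_left _ _) hn)
        have hident : P * (1 + S) + ∑ j ∈ Finset.range k, c j * (∑ i ∈ Finset.Ico j k, α (n+i)) = 1 := by
          have h := suzuki_ident (fun i => α (n+i)) k
          simpa [hPdef, hSdef, hcdef] using h
        have hstep1 : ‖w (n+k) - z (n+k)‖
            ≤ P * ((1 + S) * d - ε)
              + ∑ j ∈ Finset.range k, c j * ((∑ i ∈ Finset.Ico j k, α (n+i)) * d + 2*(k:ℝ)*ε') := by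
          refine hnorm.trans (add_le_add (mul_le_mul_of_nonneg_left hEn hP0) ?_)
          exact Finset.sum_le_sum fun j hj => mul_le_mul_of_nonneg_left (hwj j hj) (hc0 j hj)
        have hstep2 : P * ((1 + S) * d - ε)
              + ∑ j ∈ Finset.range k, c j * ((∑ i ∈ Finset.Ico j k, α (n+i)) * d + 2*(k:ℝ)*ε')
            = P * (1 + S) * d - P * ε
              + (∑ j ∈ Finset.range k, c j * (∑ i ∈ Finset.Ico j k, α (n+i))) * d
              + (∑ j ∈ Finset.range k, c j) * (2*(k:ℝ)*ε') := by
          have hsplit : ∀ j ∈ Finset.range k,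
              c j * ((∑ i ∈ Finset.Ico j k, α (n+i)) * d + 2*(k:ℝ)*ε')
                = (c j * (∑ i ∈ Finset.Ico j k, α (n+i))) * d + c j * (2*(k:ℝ)*ε') := by
            intro j hj; ring
          rw [Finset.sum_congr rfl hsplit, Finset.sum_add_distrib, ← Finset.sum_mul,
            ← Finset.sum_mul]
          ring
        have hsum_c : ∑ j ∈ Finset.range k, c j = 1 - P := by linarith
        have e1 : P * (1 + S) * d
            + (∑ j ∈ Finset.range k, c j * (∑ i ∈ Finset.Ico j k, α (n+i))) * d = d := by
          linear_combination d * hident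
        have e2 : p * ε ≤ P * ε := mul_le_mul_of_nonneg_right hPp hε.le
        have e3 : (∑ j ∈ Finset.range k, c j) * (2*(k:ℝ)*ε') ≤ 2*(k:ℝ)*ε' := by
          rw [hsum_c]
          have h1 : (1:ℝ) - P ≤ 1 := by linarith
          have h2 : (0:ℝ) ≤ 2*(k:ℝ)*ε' := by positivity
          nlinarith
        calc ‖w (n+k) - z (n+k)‖ ≤ _ := hstep1
          _ = _ := hstep2
          _ ≤ d - p*ε + 2*(k:ℝ)*ε' := by linarith
          _ = d - δ := by rw [hδdef]; ring
      exact hnot δ hδ ⟨M + k, fun m hm => by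
        obtain ⟨n, rfl⟩ : ∃ n, m = n + k := ⟨m - k, by omega⟩
        exact hmain n (by omega)⟩
    -- combine
    have hev : ∀ᶠ n in Filter.atTop,
        ‖w (n+k) - z n‖ - (1 + ∑ i ∈ Finset.range k, α (n+i)) * d ≤ ε :=
      Filter.eventually_atTop.2 ⟨N, hupper⟩
    refine (hlow.and_eventually hev).mono fun n ⟨h1, h2⟩ => ?_
    rw [abs_le]
    exact ⟨by linarith, h2⟩
  -- conclude
  have hgb : ∀ n, |‖w (n+k) - z n‖ - (1 + ∑ i ∈ Finset.range k, α (n+i)) * d|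
      ≤ C + (k:ℝ)*C + ((k:ℝ)+1)*d := by
    intro n
    have hS0 : 0 ≤ ∑ i ∈ Finset.range k, α (n+i) := Finset.sum_nonneg fun i _ => (hα _).1
    have hSk : ∑ i ∈ Finset.range k, α (n+i) ≤ (k:ℝ) := by
      calc ∑ i ∈ Finset.range k, α (n+i) ≤ ∑ i ∈ Finset.range k, (1:ℝ) :=
            Finset.sum_le_sum fun i _ => (hα _).2
        _ = (k:ℝ) := by simp
    have h1 : ‖w (n+k) - z n‖ ≤ ‖w (n+k) - z (n+k)‖ + ‖z (n+k) - z n‖ :=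
      norm_sub_le_norm_sub_add_norm_sub _ _ _
    have h2 := hztele n k
    have h3 : ∑ i ∈ Finset.range k, α (n+i) * ‖w (n+i) - z (n+i)‖
        ≤ ∑ i ∈ Finset.range k, (1:ℝ) * C := by
      refine Finset.sum_le_sum fun i _ => ?_
      exact mul_le_mul (hα _).2 (hC _) (norm_nonneg _) zero_le_one
    have h4 : ∑ i ∈ Finset.range k, (1:ℝ) * C = (k:ℝ) * C := by simp
    have h5 : ‖w (n+k) - z (n+k)‖ ≤ C := hC _
    have h6 : (1 + ∑ i ∈ Finset.range k, α (n+i)) * d ≤ ((k:ℝ)+1)*d :=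
      mul_le_mul_of_nonneg_right (by linarith) hd0
    have h7 : 0 ≤ (1 + ∑ i ∈ Finset.range k, α (n+i)) * d :=
      mul_nonneg (by linarith) hd0
    rw [abs_le]
    constructor
    · have := norm_nonneg (w (n+k) - z n)
      nlinarith [Nat.cast_nonneg (α := ℝ) k]
    · nlinarith [Nat.cast_nonneg (α := ℝ) k]
  refine le_antisymm ?_ ?_
  · have hbge : Filter.IsBoundedUnder (· ≥ ·) Filter.atTop
        (fun n => |‖w (n+k) - z n‖ - (1 + ∑ i ∈ Finset.range k, α (n+i)) * d|) :=
      Filter.isBoundedUnder_of ⟨0, fun n => abs_nonneg _⟩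
    refine le_of_forall_pos_le_add fun ε hε => ?_
    have h := Filter.liminf_le_of_frequently_le (key ε hε) hbge
    linarith
  · have hble : Filter.IsBoundedUnder (· ≤ ·) Filter.atTop
        (fun n => |‖w (n+k) - z n‖ - (1 + ∑ i ∈ Finset.range k, α (n+i)) * d|) :=
      Filter.isBoundedUnder_of ⟨C + (k:ℝ)*C + ((k:ℝ)+1)*d, hgb⟩
    exact Filter.le_liminf_of_le hble.isCoboundedUnder_ge
      (Filter.Eventually.of_forall fun n => abs_nonneg _)
end

section
/- Let (z_n) and (w_n) be bounded sequences in a Banach space X and let (α_n) be a sequence in [0,1] with 0 < liminf α_n ≤ limsup α_n < 1. Suppose that z_{n+1} = α_n w_n + (1 − α_n) z_n for all n ∈ ℕ and that limsup(‖w_{n+1} − w_n‖ − ‖z_{n+1} − z_n‖) ≤ 0. Then lim_{n→∞} ‖w_n − z_n‖ = 0. -/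
open Filter Finset

/-- Suzuki's Lemma 2.2: if `(z_n)`, `(w_n)` are bounded, `0 < liminf α_n ≤ limsup α_n < 1`,
`z_{n+1} = α_n w_n + (1-α_n) z_n` and `limsup (‖w_{n+1}-w_n‖ - ‖z_{n+1}-z_n‖) ≤ 0`,
then `‖w_n - z_n‖ → 0`. -/
theorem suzuki_lemma_two
    {X : Type*} [NormedAddCommGroup X] [NormedSpace ℝ X] [CompleteSpace X]
    (z w : ℕ → X) (α : ℕ → ℝ)
    (hzbdd : ∃ C : ℝ, ∀ n, ‖z n‖ ≤ C)
    (hwbdd : ∃ C : ℝ, ∀ n, ‖w n‖ ≤ C)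
    (hα : ∀ n, α n ∈ Set.Icc (0:ℝ) 1)
    (hαliminf : 0 < Filter.liminf α Filter.atTop)
    (hαlimsup : Filter.limsup α Filter.atTop < 1)
    (hrec : ∀ n, z (n+1) = α n • w n + (1 - α n) • z n)
    (hdiff : ∀ ε : ℝ, 0 < ε → ∃ N : ℕ, ∀ n ≥ N,
      ‖w (n+1) - w n‖ - ‖z (n+1) - z n‖ ≤ ε) :
    Filter.Tendsto (fun n => ‖w n - z n‖) Filter.atTop (nhds 0) := by
  obtain ⟨Cz, hCz⟩ := hzbdd
  obtain ⟨Cw, hCw⟩ := hwbdd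
  set d : ℕ → X := fun n => w n - z n with hdDef
  set τ : ℕ → ℝ := fun n => ‖w n - z n‖ with hτDef
  have hτd : ∀ n, τ n = ‖d n‖ := fun _ => rfl
  have hτ0 : ∀ n, 0 ≤ τ n := fun n => norm_nonneg _
  have hτbdd : ∀ n, τ n ≤ Cw + Cz := fun n =>
    (norm_sub_le _ _).trans (add_le_add (hCw n) (hCz n))
  have hbdd_le : IsBoundedUnder (· ≤ ·) atTop τ := isBoundedUnder_of ⟨Cw + Cz, hτbdd⟩
  have hbdd_ge : IsBoundedUnder (· ≥ ·) atTop τ := isBoundedUnder_of ⟨0, fun n => hτ0 n⟩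
  set T := limsup τ atTop with hTDef
  have hliminf0 : (0:ℝ) ≤ liminf τ atTop :=
    le_liminf_of_le hbdd_le.isCoboundedUnder_ge (Eventually.of_forall hτ0)
  suffices hTle : T ≤ 0 by
    exact tendsto_of_le_liminf_of_limsup_le hliminf0 hTle hbdd_le hbdd_ge
  by_contra hc0
  push_neg at hc0
  clear_value T τ d
  -- hc0 : 0 < T
  -- constants
  have hCz0 : 0 ≤ Cz := (norm_nonneg (z 0)).trans (hCz 0)
  set a' := liminf α atTop / 2 with ha'Def
  have ha'pos : 0 < a' := by positivity
  have ha'lt : a' < liminf α atTop := by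
    have := hαliminf; rw [ha'Def]; linarith
  have hαbdd_ge : IsBoundedUnder (· ≥ ·) atTop α :=
    isBoundedUnder_of ⟨0, fun n => (hα n).1⟩
  have hαbdd_le : IsBoundedUnder (· ≤ ·) atTop α :=
    isBoundedUnder_of ⟨1, fun n => (hα n).2⟩
  have hαliminf_le : liminf α atTop ≤ limsup α atTop := liminf_le_limsup hαbdd_le hαbdd_ge
  set b := (limsup α atTop + 1) / 2 with hbDef
  have hb1 : b < 1 := by rw [hbDef]; linarith
  have hbgt : limsup α atTop < b := by rw [hbDef]; linarith
  have hb0 : 0 < b := by rw [hbDef]; linarith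
  set c := (1 - b)⁻¹ with hcDef
  have h1b : 0 < 1 - b := by linarith
  have hcpos : 0 < c := by rw [hcDef]; positivity
  have hc : c * (1 - b) = 1 := inv_mul_cancel₀ (by linarith)
  have h2c : 1 ≤ 2 * c := by nlinarith
  -- choose k
  obtain ⟨k, hk⟩ := exists_nat_gt ((2 * Cz) / (a' * (T / 2)))
  have hq : 0 < a' * (T / 2) := by positivity
  have hkk : 2 * Cz < ((k : ℝ) + 1) * (a' * (T / 2)) := by
    rw [div_lt_iff₀ hq] at hk
    nlinarith
  -- choose ε
  set Q := (2 * c) ^ k with hQDef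
  have hQ1 : (1:ℝ) ≤ Q := one_le_pow₀ h2c
  have hQpos : 0 < Q := by linarith
  set ε := T / (6 * Q) with hεDef
  have hεpos : 0 < ε := by rw [hεDef]; positivity
  have hεQ : 3 * ε * Q = T / 2 := by
    rw [hεDef]; field_simp; ring
  have hεT : ε ≤ T / 6 := by
    rw [hεDef, div_le_div_iff₀ (by positivity) (by norm_num)]
    nlinarith
  clear_value a' b c Q ε
  -- eventual bounds
  obtain ⟨N4, hN4⟩ := hdiff ε hεpos
  obtain ⟨N1, hN1⟩ := eventually_atTop.mp (eventually_lt_of_lt_liminf ha'lt hαbdd_ge)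
  obtain ⟨N2, hN2⟩ := eventually_atTop.mp (eventually_lt_of_limsup_lt hbgt hαbdd_le)
  obtain ⟨N3, hN3⟩ := eventually_atTop.mp
    (eventually_lt_of_limsup_lt (show limsup τ atTop < T + ε by rw [← hTDef]; linarith) hbdd_le)
  set N := max (max N1 N2) (max N3 N4) with hNDef
  have hN1N : N1 ≤ N := le_trans (le_max_left _ _) (le_max_left _ _)
  have hN2N : N2 ≤ N := le_trans (le_max_right _ _) (le_max_left _ _)
  have hN3N : N3 ≤ N := le_trans (le_max_left _ _) (le_max_right _ _)
  have hN4N : N4 ≤ N := le_trans (le_max_right _ _) (le_max_right _ _)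
  clear_value N
  -- peak index
  have hfreq : ∃ᶠ n in atTop, T - ε < τ n :=
    frequently_lt_of_lt_limsup hbdd_ge.isCoboundedUnder_le (by rw [← hTDef]; linarith)
  obtain ⟨m, hmge, hpeak⟩ := frequently_atTop.mp hfreq (N + k)
  set p := m - k with hpDef
  have hpk : p + k = m := by omega
  have hpN : N ≤ p := by omega
  clear_value p
  -- recursion identities
  have hzstep : ∀ n, z (n+1) - z n = α n • d n := by
    intro n
    rw [hrec n]
    simp only [hdDef]
    module
  have hdstep : ∀ n, d (n+1) = (1 - α n) • d n + (w (n+1) - w n) := by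
    intro n
    simp only [hdDef]
    rw [hrec n]
    module
  have hznorm : ∀ n, ‖z (n+1) - z n‖ = α n * τ n := by
    intro n
    rw [hzstep n, norm_smul, Real.norm_eq_abs, abs_of_nonneg (hα n).1, hτd n]
  have hwstep : ∀ n ≥ N, ‖w (n+1) - w n‖ ≤ α n * (T + ε) + ε := by
    intro n hn
    have h4 : ‖w (n+1) - w n‖ - ‖z (n+1) - z n‖ ≤ ε := hN4 n (le_trans hN4N hn)
    have h3 : τ n < T + ε := hN3 n (le_trans hN3N hn)
    have hzn := hznorm n
    have : α n * τ n ≤ α n * (T + ε) := mul_le_mul_of_nonneg_left h3.le (hα n).1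
    linarith
  -- dual vector at peak
  have hτmpos : 0 < τ m := by
    have : 0 < T - ε := by linarith
    linarith
  have hdm0 : d m ≠ 0 := by
    intro h
    have h2 : τ m = 0 := by rw [hτd m, h, norm_zero]
    linarith
  obtain ⟨f, hf1, hfm0⟩ := exists_dual_vector ℝ (d m) (norm_ne_zero_iff.mpr hdm0)
  have hfm : f (d m) = ‖d m‖ := by simpa using hfm0
  have hfle : ∀ x : X, f x ≤ ‖x‖ := by
    intro x
    calc f x ≤ |f x| := le_abs_self _
    _ = ‖f x‖ := (Real.norm_eq_abs _).symm
    _ ≤ ‖f‖ * ‖x‖ := f.le_opNorm x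
    _ = ‖x‖ := by rw [hf1, one_mul]
  set E : ℕ → ℝ := fun i => 3 * ε * (2 * c) ^ i with hEDef
  have hE0 : ∀ i, 0 ≤ E i := by
    intro i; simp only [hEDef]; positivity
  clear_value E
  -- the backward induction claim
  have claim : ∀ i, i ≤ k → T - E i ≤ f (d (p + (k - i))) := by
    intro i
    induction i with
    | zero =>
      intro _
      have : p + (k - 0) = m := by omega
      rw [this, hfm]
      have hE0' : E 0 = 3 * ε := by simp [hEDef]
      have hdm : ‖d m‖ = τ m := (hτd m).symm
      rw [hE0', hdm]
      linarith only [hpeak, hεpos]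
    | succ i ih =>
      intro hik
      have hIH := ih (by omega)
      set j := p + (k - (i+1)) with hjDef
      have hj1 : j + 1 = p + (k - i) := by omega
      have hjN : N ≤ j := le_trans hpN (Nat.le_add_right _ _)
      clear_value j
      rw [← hj1] at hIH
      have hlin : f (d (j+1)) = (1 - α j) * f (d j) + f (w (j+1) - w j) := by
        rw [hdstep j, map_add, map_smul, smul_eq_mul]
      have hws : f (w (j+1) - w j) ≤ α j * (T + ε) + ε :=
        le_trans (hfle _) (hwstep j hjN)
      have hαjε : α j * ε ≤ ε := mul_le_of_le_one_left hεpos.le (hα j).2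
      have key : (1 - α j) * T - (E i + 2 * ε) ≤ (1 - α j) * f (d j) := by
        linarith only [hIH, hws, hlin, hαjε]
      have hbj : 1 - b < 1 - α j := by
        have hx := hN2 j (le_trans hN2N hjN)
        linarith only [hx]
      have hgoal : T - c * (E i + 2 * ε) ≤ f (d j) := by
        rcases le_or_gt T (f (d j)) with h | h
        · have : 0 ≤ c * (E i + 2 * ε) :=
            mul_nonneg hcpos.le (by linarith only [hE0 i, hεpos])
          linarith only [this, h]
        · have h1 : (1 - α j) * (T - f (d j)) ≤ E i + 2 * ε := by linarith [key]
          have hmul : (1 - b) * (T - f (d j)) ≤ (1 - α j) * (T - f (d j)) :=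
            mul_le_mul_of_nonneg_right hbj.le (by linarith only [h])
          have h2 : (1 - b) * (T - f (d j)) ≤ E i + 2 * ε := le_trans hmul h1
          have h3 := mul_le_mul_of_nonneg_left h2 hcpos.le
          rw [← mul_assoc, hc, one_mul] at h3
          linarith only [h3]
      have hE : c * (E i + 2 * ε) ≤ E (i+1) := by
        simp only [hEDef, pow_succ]
        have h2ci : (1:ℝ) ≤ (2 * c) ^ i := one_le_pow₀ h2c
        have haux : 0 ≤ (c * ε) * ((2*c)^i - 1) :=
          mul_nonneg (by positivity) (by linarith only [h2ci])
        nlinarith only [haux, mul_nonneg hcpos.le hεpos.le]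
      linarith only [hgoal, hE]
  -- term-wise lower bound for the telescoping sum
  have hterm : ∀ i ∈ Finset.range (k+1), a' * (T / 2) ≤ f (z (p+i+1) - z (p+i)) := by
    intro i hi
    have hik : i ≤ k := by
      rw [Finset.mem_range, Nat.lt_succ_iff] at hi; exact hi
    have h1 : T - E (k - i) ≤ f (d (p + (k - (k - i)))) := claim (k - i) (Nat.sub_le k i)
    have h2 : p + (k - (k - i)) = p + i := by omega
    rw [h2] at h1
    have hEk : E (k - i) ≤ E k := by
      simp only [hEDef]
      exact mul_le_mul_of_nonneg_left (pow_le_pow_right₀ h2c (Nat.sub_le k i)) (by positivity)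
    have hEkT : E k = T / 2 := by simp only [hEDef]; rw [← hQDef]; exact hεQ
    have hfd : T / 2 ≤ f (d (p+i)) := by
      rw [hEkT] at hEk; linarith only [hEk, h1]
    have heq : f (z (p+i+1) - z (p+i)) = α (p+i) * f (d (p+i)) := by
      rw [hzstep (p+i), map_smul, smul_eq_mul]
    rw [heq]
    have hα' : a' ≤ α (p+i) :=
      (hN1 (p+i) (le_trans hN1N (le_trans hpN (Nat.le_add_right _ _)))).le
    have hT2 : (0:ℝ) ≤ T / 2 := by linarith only [hc0]
    exact mul_le_mul hα' hfd hT2 (le_trans ha'pos.le hα')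
  -- telescoping sum
  have htel : ∑ i ∈ Finset.range (k+1), f (z (p+i+1) - z (p+i))
      = f (z (p+(k+1))) - f (z p) := by
    have h := Finset.sum_range_sub (fun i => f (z (p+i))) (k+1)
    calc ∑ i ∈ Finset.range (k+1), f (z (p+i+1) - z (p+i))
        = ∑ i ∈ Finset.range (k+1), (f (z (p+(i+1))) - f (z (p+i))) := by
          apply Finset.sum_congr rfl
          intro i _
          rw [map_sub]
          norm_num [Nat.add_assoc]
      _ = f (z (p+(k+1))) - f (z (p+0)) := h
      _ = f (z (p+(k+1))) - f (z p) := by norm_num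
  have hlb := Finset.card_nsmul_le_sum (Finset.range (k+1))
    (fun i => f (z (p+i+1) - z (p+i))) (a' * (T / 2)) hterm
  rw [Finset.card_range, nsmul_eq_mul] at hlb
  have hub : f (z (p+(k+1))) - f (z p) ≤ 2 * Cz := by
    have h1 : f (z (p+(k+1))) ≤ Cz := le_trans (hfle _) (hCz _)
    have h2 : -f (z p) ≤ Cz := by
      have := hfle (-(z p))
      rw [map_neg, norm_neg] at this
      exact le_trans this (hCz _)
    linarith
  rw [htel] at hlb
  push_cast at hlb
  linarith
end

section
/- Let (a_n) be a sequence of nonnegative real numbers such that for all n ∈ ℕ, a_{n+1} ≤ (1 − s_n) a_n + s_n t_n + δ_n, where (s_n) ⊂ [0,1] and (t_n), (δ_n) are real sequences such that ∑_{n=0}^∞ s_n = ∞, limsup t_n ≤ 0 and ∑_{n=0}^∞ δ_n < ∞ (with δ_n ≥ 0). Then (a_n) converges to zero. -/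
/-- Key induction: if `a_{n+1} ≤ (1-s_n)a_n + s_n c + δ_n` for `n ≥ N`, then
`a m ≤ exp(-∑_{i∈[N,m)} s_i) * a N + c + ∑_{i∈[N,m)} δ_i`. -/
lemma xu_key (a s δ : ℕ → ℝ) (ha : ∀ n, 0 ≤ a n)
    (hs : ∀ n, s n ∈ Set.Icc (0:ℝ) 1) (hδ0 : ∀ n, 0 ≤ δ n)
    (c : ℝ) (hc : 0 ≤ c) (N : ℕ)
    (hrec : ∀ n ≥ N, a (n+1) ≤ (1 - s n) * a n + s n * c + δ n) :
    ∀ m, N ≤ m → a m ≤ Real.exp (-(∑ i ∈ Finset.Ico N m, s i)) * a N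
      + c + ∑ i ∈ Finset.Ico N m, δ i := by
  intro m hm
  induction m, hm using Nat.le_induction with
  | base =>
      simp only [Finset.Ico_self, Finset.sum_empty, neg_zero, Real.exp_zero, one_mul, add_zero]
      linarith
  | succ m hm ih =>
      have hsm := hs m
      obtain ⟨hsm0, hsm1⟩ := hsm
      have hD : 0 ≤ ∑ i ∈ Finset.Ico N m, δ i := Finset.sum_nonneg fun i _ => hδ0 i
      have hE : 0 < Real.exp (-(∑ i ∈ Finset.Ico N m, s i)) := Real.exp_pos _
      rw [Finset.sum_Ico_succ_top hm, Finset.sum_Ico_succ_top hm]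
      have h1 : a (m+1) ≤ (1 - s m) * a m + s m * c + δ m := hrec m hm
      have h2 : (1 - s m) * a m ≤ (1 - s m) *
          (Real.exp (-(∑ i ∈ Finset.Ico N m, s i)) * a N + c + ∑ i ∈ Finset.Ico N m, δ i) :=
        mul_le_mul_of_nonneg_left ih (by linarith)
      have h3 : 1 - s m ≤ Real.exp (-(s m)) := by
        have := Real.add_one_le_exp (-(s m)); linarith
      have h4 : (1 - s m) * (Real.exp (-(∑ i ∈ Finset.Ico N m, s i)) * a N)
          ≤ Real.exp (-(s m)) * (Real.exp (-(∑ i ∈ Finset.Ico N m, s i)) * a N) :=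
        mul_le_mul_of_nonneg_right h3 (mul_nonneg hE.le (ha N))
      have h5 : Real.exp (-(s m)) * Real.exp (-(∑ i ∈ Finset.Ico N m, s i))
          = Real.exp (-((∑ i ∈ Finset.Ico N m, s i) + s m)) := by
        rw [← Real.exp_add]; ring_nf
      have h6 : (1 - s m) * (Real.exp (-(∑ i ∈ Finset.Ico N m, s i)) * a N)
          ≤ Real.exp (-((∑ i ∈ Finset.Ico N m, s i) + s m)) * a N := by
        calc (1 - s m) * (Real.exp (-(∑ i ∈ Finset.Ico N m, s i)) * a N)
            ≤ Real.exp (-(s m)) * (Real.exp (-(∑ i ∈ Finset.Ico N m, s i)) * a N) := h4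
          _ = Real.exp (-((∑ i ∈ Finset.Ico N m, s i) + s m)) * a N := by
              rw [← mul_assoc, h5]
      nlinarith [mul_nonneg hsm0 hD, h6]

/-- Xu's Lemma 2.5: if `a_{n+1} ≤ (1 - s_n) a_n + s_n t_n + δ_n` with `(s_n) ⊂ [0,1]`,
`∑ s_n = ∞`, `limsup t_n ≤ 0` (in the sense: for every `ε > 0`, eventually `t_n ≤ ε`)
and `∑ δ_n < ∞` with `δ_n ≥ 0`, then `a_n → 0`. -/
theorem xu_lemma
    (a s t δ : ℕ → ℝ)
    (ha : ∀ n, 0 ≤ a n)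
    (hs : ∀ n, s n ∈ Set.Icc (0:ℝ) 1)
    (hrec : ∀ n, a (n+1) ≤ (1 - s n) * a n + s n * t n + δ n)
    (hssum : Filter.Tendsto (fun n => ∑ i ∈ Finset.range n, s i) Filter.atTop Filter.atTop)
    (ht : ∀ ε : ℝ, 0 < ε → ∃ N : ℕ, ∀ n ≥ N, t n ≤ ε)
    (hδ0 : ∀ n, 0 ≤ δ n)
    (hδ : Summable δ) :
    Filter.Tendsto a Filter.atTop (nhds 0) := by
  rw [Metric.tendsto_atTop]
  intro ε hε
  -- choose N₁ for t, N₂ for the δ tail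
  obtain ⟨N₁, hN₁⟩ := ht (ε/4) (by linarith)
  -- tail of δ tends to 0
  have htail : Filter.Tendsto (fun N => ∑' i, δ (i + N)) Filter.atTop (nhds 0) :=
    _root_.tendsto_sum_nat_add δ
  obtain ⟨N₂, hN₂⟩ := Metric.tendsto_atTop.mp htail (ε/4) (by linarith)
  set N := max N₁ N₂ with hN
  have htailN : ∑' i, δ (i + N) ≤ ε/4 := by
    have := hN₂ N (le_max_right _ _)
    rw [Real.dist_eq, sub_zero] at this
    exact le_of_lt (lt_of_abs_lt this)
  have hrec' : ∀ n ≥ N, a (n+1) ≤ (1 - s n) * a n + s n * (ε/4) + δ n := by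
    intro n hn
    have h1 := hrec n
    have h2 : s n * t n ≤ s n * (ε/4) :=
      mul_le_mul_of_nonneg_left (hN₁ n (le_trans (le_max_left _ _) hn)) (hs n).1
    linarith
  have key := xu_key a s δ ha hs hδ0 (ε/4) (by linarith) N hrec'
  -- δ partial sums over Ico are bounded by the tail
  have hDbound : ∀ m, ∑ i ∈ Finset.Ico N m, δ i ≤ ε/4 := by
    intro m
    have hsumm : Summable (fun i => δ (i + N)) := (summable_nat_add_iff N).mpr hδ
    calc ∑ i ∈ Finset.Ico N m, δ i
        = ∑ k ∈ Finset.range (m - N), δ (k + N) := by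
          rw [Finset.sum_Ico_eq_sum_range]
          exact Finset.sum_congr rfl fun i _ => by rw [add_comm]
      _ ≤ ∑' i, δ (i + N) := Summable.sum_le_tsum _ (fun i _ => hδ0 _) hsumm
      _ ≤ ε/4 := htailN
  -- the exponential term tends to 0
  have hexp : Filter.Tendsto
      (fun m => Real.exp ((∑ i ∈ Finset.range N, s i) - ∑ i ∈ Finset.range m, s i) * a N)
      Filter.atTop (nhds 0) := by
    have h1 : Filter.Tendsto (fun m => (∑ i ∈ Finset.range N, s i) - ∑ i ∈ Finset.range m, s i)
        Filter.atTop Filter.atBot := by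
      have := Filter.tendsto_atBot_add_const_left Filter.atTop
        (∑ i ∈ Finset.range N, s i)
        (Filter.tendsto_neg_atTop_atBot.comp hssum)
      exact this.congr fun m => by simp [sub_eq_add_neg]
    have h2 := (Real.tendsto_exp_atBot.comp h1).mul_const (a N)
    simpa using h2
  obtain ⟨M, hM⟩ := Metric.tendsto_atTop.mp hexp (ε/4) (by linarith)
  refine ⟨max N M, fun m hm => ?_⟩
  have hmN : N ≤ m := le_trans (le_max_left _ _) hm
  have hmM : M ≤ m := le_trans (le_max_right _ _) hm
  have hkey := key m hmN
  have hIco : (∑ i ∈ Finset.Ico N m, s i) = (∑ i ∈ Finset.range m, s i) - ∑ i ∈ Finset.range N, s i := by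
    rw [Finset.sum_Ico_eq_sub _ hmN]
  have hexpm : Real.exp (-(∑ i ∈ Finset.Ico N m, s i)) * a N < ε/4 := by
    have := hM m hmM
    rw [Real.dist_eq, sub_zero] at this
    have h3 := lt_of_abs_lt this
    rw [hIco]
    calc Real.exp (-((∑ i ∈ Finset.range m, s i) - ∑ i ∈ Finset.range N, s i)) * a N
        = Real.exp ((∑ i ∈ Finset.range N, s i) - ∑ i ∈ Finset.range m, s i) * a N := by ring_nf
      _ < ε/4 := h3
  have hD := hDbound m
  rw [Real.dist_eq, sub_zero, abs_of_nonneg (ha m)]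
  linarith
end

section
/- Let H be a real Hilbert space, J : H → H a nonexpansive map, s a fixed point of J, u ∈ H, and N ∈ ℕ \ {0} with N ≥ 2‖u − s‖. Then for every k ∈ ℕ and every monotone function f : ℕ → ℕ, there are n ≤ f^{(r)}(0) and p ∈ B_N such that ‖J(p) − p‖ ≤ 1/(f(n)+1) and, for all q ∈ B_N, if ‖J(q) − q‖ ≤ 1/(n+1) then ‖p − u‖² ≤ ‖q − u‖² + 1/(k+1), where r := N²(k+1). -/
/-- Quantitative projection argument (Proposition 3.1): for a nonexpansive `J` with fixed
point `s`, `u ∈ H` and `N ≥ 2‖u - s‖`, for every `k` and monotone `f` there are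
`n ≤ f^{(r)}(0)` (with `r := N²(k+1)`) and `p` in the ball `B_N` around `s` such that
`‖J p - p‖ ≤ 1/(f n + 1)` and every `q ∈ B_N` with `‖J q - q‖ ≤ 1/(n+1)` satisfies
`‖p - u‖² ≤ ‖q - u‖² + 1/(k+1)`. -/
theorem quantitative_projection
    {H : Type*} [NormedAddCommGroup H] [InnerProductSpace ℝ H] [CompleteSpace H]
    (J : H → H) (hJ : ∀ x y : H, ‖J x - J y‖ ≤ ‖x - y‖)
    (s : H) (hs : J s = s) (u : H)
    (N : ℕ) (hN0 : N ≠ 0) (hNu : 2 * ‖u - s‖ ≤ (N : ℝ))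
    (k : ℕ) (f : ℕ → ℕ) (hf : Monotone f) :
    ∃ n ≤ f^[N^2 * (k+1)] 0, ∃ p : H, ‖p - s‖ ≤ (N : ℝ) ∧
      ‖J p - p‖ ≤ 1 / ((f n : ℝ) + 1) ∧
      ∀ q : H, ‖q - s‖ ≤ (N : ℝ) → ‖J q - q‖ ≤ 1 / ((n : ℝ) + 1) →
        ‖p - u‖^2 ≤ ‖q - u‖^2 + 1 / ((k : ℝ) + 1) := by
  classical
  set r := N ^ 2 * (k + 1) with hr
  set m : ℕ → ℕ := fun i => f^[i] 0 with hm
  have hstep : ∀ i, m (i + 1) = f (m i) := by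
    intro i; simp [hm, Function.iterate_succ_apply']
  have hmmono : Monotone m := by
    apply monotone_nat_of_le_succ
    intro i
    induction i with
    | zero => simp [hm]
    | succ j ih =>
      rw [hstep, hstep]
      exact hf ih
  set S : ℕ → Set ℝ := fun i =>
    { t | ∃ q : H, ‖q - s‖ ≤ (N : ℝ) ∧ ‖J q - q‖ ≤ 1 / ((m i : ℝ) + 1) ∧ t = ‖q - u‖ ^ 2 }
    with hS
  have hsmem : ∀ i, (‖s - u‖ ^ 2 : ℝ) ∈ S i := by
    intro i
    refine ⟨s, by simp, ?_, rfl⟩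
    rw [hs, sub_self, norm_zero]
    positivity
  have hSne : ∀ i, (S i).Nonempty := fun i => ⟨_, hsmem i⟩
  have hbdd : ∀ i, BddBelow (S i) := by
    intro i
    refine ⟨0, ?_⟩
    rintro t ⟨q, _, _, rfl⟩
    positivity
  set a : ℕ → ℝ := fun i => sInf (S i) with ha
  have hsub : ∀ i, S (i + 1) ⊆ S i := by
    intro i t ⟨q, h1, h2, h3⟩
    refine ⟨q, h1, h2.trans ?_, h3⟩
    apply one_div_le_one_div_of_le
    · positivity
    · have h := hmmono (Nat.le_succ i)
      have h' : ((m i : ℝ)) ≤ (m (i+1) : ℝ) := by exact_mod_cast h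
      linarith
  have hamono : ∀ i, a i ≤ a (i + 1) := by
    intro i
    exact csInf_le_csInf (hbdd i) (hSne (i + 1)) (hsub i)
  have ha0 : ∀ i, 0 ≤ a i := by
    intro i
    apply le_csInf (hSne i)
    rintro t ⟨q, _, _, rfl⟩
    positivity
  have haub : ∀ i, a i ≤ ‖s - u‖ ^ 2 := fun i => csInf_le (hbdd i) (hsmem i)
  have hN1 : (1 : ℝ) ≤ (N : ℝ) := by
    exact_mod_cast Nat.one_le_iff_ne_zero.mpr hN0
  have hsu : ‖s - u‖ ^ 2 < (N : ℝ) ^ 2 := by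
    have h1 : ‖s - u‖ = ‖u - s‖ := norm_sub_rev _ _
    have h2 : 0 ≤ ‖u - s‖ := norm_nonneg _
    nlinarith
  -- find the good index
  have key : ∃ i < r, a (i + 1) < a i + 1 / ((k : ℝ) + 1) := by
    by_contra hcon
    push_neg at hcon
    have claim : ∀ j, j ≤ r → (j : ℝ) * (1 / ((k : ℝ) + 1)) ≤ a j := by
      intro j hj
      induction j with
      | zero => simpa using ha0 0
      | succ i ih =>
        have hi : i < r := lt_of_lt_of_le (Nat.lt_succ_self i) hj
        have := hcon i hi
        have := ih (le_of_lt hi)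
        push_cast
        linarith
    have hrr := claim r le_rfl
    have hreq : (r : ℝ) * (1 / ((k : ℝ) + 1)) = (N : ℝ) ^ 2 := by
      have hk : ((k : ℝ) + 1) ≠ 0 := by positivity
      rw [hr]
      push_cast
      field_simp
    rw [hreq] at hrr
    have := haub r
    linarith
  obtain ⟨i, hir, hilt⟩ := key
  obtain ⟨t, htmem, htlt⟩ := exists_lt_of_csInf_lt (hSne (i + 1)) hilt
  obtain ⟨p, hp1, hp2, rfl⟩ := htmem
  refine ⟨m i, hmmono (le_of_lt hir), p, hp1, ?_, ?_⟩
  · rw [hstep i] at hp2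
    exact hp2
  · intro q hq1 hq2
    have hqmem : (‖q - u‖ ^ 2 : ℝ) ∈ S i := ⟨q, hq1, hq2, rfl⟩
    have := csInf_le (hbdd i) hqmem
    linarith
end

section
/- Let H be a real Hilbert space and T : H → 2^H a maximal monotone operator. Let (c_n) ⊂ ℝ⁺ and c ∈ ℕ \ {0} satisfy c_n ≥ 1/c for all n, and let 𝒞 : ℕ → ℕ be a monotone function with c_n ≤ 𝒞(n) for all n ∈ ℕ. Write J := J_{1/c} and J_{n'} := J_{c_{n'}} for the resolvents of T. Define ζ(k,n) := 𝒞(n)·c·(k+1) − 1. Then for all k, n ∈ ℕ and all p ∈ H: if ‖J(p) − p‖ ≤ 1/(ζ(k,n)+1), then ‖J_{n'}(p) − p‖ ≤ 1/(k+1) for all n' ≤ n. -/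
open scoped Pointwise RealInnerProductSpace

/-- A set-valued operator `T : H → Set H` is monotone. -/
def IsMonotoneOp {H : Type*} [NormedAddCommGroup H] [InnerProductSpace ℝ H]
    (T : H → Set H) : Prop :=
  ∀ x x' y y' : H, y ∈ T x → y' ∈ T x' → 0 ≤ ⟪x - x', y - y'⟫

/-- `T` is maximal monotone. -/
def IsMaximalMonotoneOp {H : Type*} [NormedAddCommGroup H] [InnerProductSpace ℝ H]
    (T : H → Set H) : Prop :=
  IsMonotoneOp T ∧ ∀ T' : H → Set H, IsMonotoneOp T' → (∀ x, T x ⊆ T' x) → T' = T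

/-- `J` is the family of resolvents of `T`: `J c = (I + c T)⁻¹` for `c > 0`. -/
def IsResolventFamilyOf {H : Type*} [NormedAddCommGroup H] [InnerProductSpace ℝ H]
    (J : ℝ → H → H) (T : H → Set H) : Prop :=
  ∀ c : ℝ, 0 < c → ∀ x : H, x - J c x ∈ c • T (J c x)

/-- Key resolvent inequality: for `0 < μ ≤ λ`, `‖J_λ p − p‖ ≤ (λ/μ)·‖J_μ p − p‖`. -/
lemma resolvent_norm_le {H : Type*} [NormedAddCommGroup H] [InnerProductSpace ℝ H]
    (T : H → Set H) (hT : IsMonotoneOp T)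
    (J : ℝ → H → H) (hJ : IsResolventFamilyOf J T)
    {μ lam : ℝ} (hμ : 0 < μ) (hlam : μ ≤ lam) (p : H) :
    μ * ‖J lam p - p‖ ≤ lam * ‖J μ p - p‖ := by
  have hlam0 : 0 < lam := lt_of_lt_of_le hμ hlam
  set u := J μ p with hu
  set v := J lam p with hv
  obtain ⟨y, hy, hya⟩ := hJ μ hμ p
  obtain ⟨y', hy', hyb⟩ := hJ lam hlam0 p
  have hyval : y = μ⁻¹ • (p - u) := by
    rw [← hya, smul_smul, inv_mul_cancel₀ hμ.ne', one_smul]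
  have hy'val : y' = lam⁻¹ • (p - v) := by
    rw [← hyb, smul_smul, inv_mul_cancel₀ hlam0.ne', one_smul]
  have hmono := hT u v y y' hy hy'
  rw [hyval, hy'val] at hmono
  set a := p - u with ha
  set b := p - v with hb
  have huv : u - v = b - a := by simp [ha, hb]
  rw [huv] at hmono
  have hexp : ⟪b - a, μ⁻¹ • a - lam⁻¹ • b⟫ =
      μ⁻¹ * ⟪a, b⟫ - lam⁻¹ * ‖b‖^2 - μ⁻¹ * ‖a‖^2 + lam⁻¹ * ⟪a, b⟫ := by
    rw [inner_sub_left, inner_sub_right, inner_sub_right, real_inner_smul_right,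
      real_inner_smul_right, real_inner_smul_right, real_inner_smul_right,
      real_inner_self_eq_norm_sq, real_inner_self_eq_norm_sq, real_inner_comm b a]
    ring
  rw [hexp] at hmono
  have hcs : ⟪a, b⟫ ≤ ‖a‖ * ‖b‖ := real_inner_le_norm a b
  have hkey : μ * ‖b‖^2 + lam * ‖a‖^2 ≤ (lam + μ) * (‖a‖ * ‖b‖) := by
    have h2 : 0 ≤ μ * lam * (μ⁻¹ * ⟪a, b⟫ - lam⁻¹ * ‖b‖^2 - μ⁻¹ * ‖a‖^2 + lam⁻¹ * ⟪a, b⟫) :=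
      mul_nonneg (mul_nonneg hμ.le hlam0.le) hmono
    have e1 : μ * lam * (μ⁻¹ * ⟪a, b⟫ - lam⁻¹ * ‖b‖^2 - μ⁻¹ * ‖a‖^2 + lam⁻¹ * ⟪a, b⟫)
        = (lam + μ) * ⟪a, b⟫ - μ * ‖b‖^2 - lam * ‖a‖^2 := by
      field_simp; ring
    rw [e1] at h2
    nlinarith [mul_nonneg (add_pos hlam0 hμ).le (sub_nonneg.mpr hcs)]
  have hna : 0 ≤ ‖a‖ := norm_nonneg a
  have hnb : 0 ≤ ‖b‖ := norm_nonneg b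
  have hfac : (μ * ‖b‖ - lam * ‖a‖) * (‖b‖ - ‖a‖) ≤ 0 := by nlinarith
  have hgoal : μ * ‖b‖ ≤ lam * ‖a‖ := by
    rcases le_or_gt ‖b‖ ‖a‖ with h | h
    · nlinarith
    · nlinarith
  have e2 : ‖v - p‖ = ‖b‖ := by rw [hb, norm_sub_rev]
  have e3 : ‖u - p‖ = ‖a‖ := by rw [ha, norm_sub_rev]
  rw [e2, e3] at *
  exact hgoal

/-- Lemma 3.2 of the paper: with `ζ(k,n) := 𝒞(n)·c·(k+1) − 1`, if
`‖J_{1/c}(p) − p‖ ≤ 1/(ζ(k,n)+1)` then `‖J_{c_{n'}}(p) − p‖ ≤ 1/(k+1)` for all `n' ≤ n`. -/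
theorem resolvent_almost_fixed_points
    {H : Type*} [NormedAddCommGroup H] [InnerProductSpace ℝ H] [CompleteSpace H]
    (T : H → Set H) (hT : IsMaximalMonotoneOp T)
    (J : ℝ → H → H) (hJ : IsResolventFamilyOf J T)
    (cs : ℕ → ℝ) (hcs0 : ∀ n, 0 < cs n)
    (c : ℕ) (hc : 0 < c) (hcsc : ∀ n, 1 / (c : ℝ) ≤ cs n)
    (C : ℕ → ℕ) (hC : Monotone C) (hcsC : ∀ n, cs n ≤ (C n : ℝ)) :
    ∀ k n : ℕ, ∀ p : H,
      ‖J (1 / (c : ℝ)) p - p‖ ≤ 1 / (((C n * c * (k+1) - 1 : ℕ) : ℝ) + 1) →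
      ∀ n' ≤ n, ‖J (cs n') p - p‖ ≤ 1 / ((k : ℝ) + 1) := by
  intro k n p hp n' hn'
  have hcR : (0 : ℝ) < c := by exact_mod_cast hc
  have hμ : (0 : ℝ) < 1 / c := by positivity
  have hCn'pos : 0 < C n' := by
    exact_mod_cast lt_of_lt_of_le (hcs0 n') (hcsC n')
  have hCnpos : 0 < C n := lt_of_lt_of_le hCn'pos (hC hn')
  -- ζ + 1 = C n * c * (k+1)
  have hζ : (((C n * c * (k+1) - 1 : ℕ) : ℝ) + 1) = (C n : ℝ) * c * (k+1) := by
    have h1 : 1 ≤ C n * c * (k+1) :=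
      Nat.succ_le_of_lt (Nat.mul_pos (Nat.mul_pos hCnpos hc) k.succ_pos)
    have heq : (C n * c * (k+1) - 1) + 1 = C n * c * (k+1) := by omega
    rw [show ((C n * c * (k+1) - 1 : ℕ) : ℝ) + 1 = ((C n * c * (k+1) - 1 + 1 : ℕ) : ℝ) by
      push_cast; ring, heq]
    push_cast
    ring
  rw [hζ] at hp
  have hkey := resolvent_norm_le T hT.1 J hJ hμ (hcsc n') p
  have hcsn : cs n' ≤ (C n : ℝ) := le_trans (hcsC n') (by exact_mod_cast hC hn')
  have hk1 : (0 : ℝ) < (k : ℝ) + 1 := by positivity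
  -- from hkey : (1/c) * ‖J (cs n') p - p‖ ≤ cs n' * ‖J (1/c) p - p‖
  have h1 : ‖J (cs n') p - p‖ ≤ (c : ℝ) * cs n' * ‖J (1 / c) p - p‖ := by
    have := mul_le_mul_of_nonneg_left hkey hcR.le
    calc ‖J (cs n') p - p‖ = (c : ℝ) * ((1/c) * ‖J (cs n') p - p‖) := by
          field_simp
      _ ≤ (c : ℝ) * (cs n' * ‖J (1/c) p - p‖) :=
          mul_le_mul_of_nonneg_left hkey hcR.le
      _ = (c : ℝ) * cs n' * ‖J (1/c) p - p‖ := by ring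
  have h2 : (c : ℝ) * cs n' * ‖J (1 / c) p - p‖ ≤ (c : ℝ) * (C n) * (1 / ((C n : ℝ) * c * (k+1))) := by
    have hnn : 0 ≤ ‖J (1/c) p - p‖ := norm_nonneg _
    have hb : (c : ℝ) * cs n' ≤ (c : ℝ) * (C n) :=
      mul_le_mul_of_nonneg_left hcsn hcR.le
    calc (c : ℝ) * cs n' * ‖J (1 / c) p - p‖
        ≤ (c : ℝ) * (C n) * ‖J (1 / c) p - p‖ :=
          mul_le_mul_of_nonneg_right hb hnn
      _ ≤ (c : ℝ) * (C n) * (1 / ((C n : ℝ) * c * (k+1))) := by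
          apply mul_le_mul_of_nonneg_left hp (by positivity)
  have h3 : (c : ℝ) * (C n) * (1 / ((C n : ℝ) * c * (k+1))) = 1 / ((k : ℝ) + 1) := by
    have hCnR : (0 : ℝ) < C n := by exact_mod_cast hCnpos
    rw [mul_one_div, div_eq_div_iff (by positivity) hk1.ne']
    ring
  linarith [le_trans h1 h2, le_of_eq h3]
end

section
/- Let H be a real Hilbert space, J : H → H a nonexpansive map, s a fixed point of J, u ∈ H, and N ∈ ℕ \ {0} with N ≥ 2‖u − s‖. Then for every k ∈ ℕ and every monotone function f : ℕ → ℕ, there are n ≤ 24N(f̌^{(R)}(0)+1)² and p ∈ B_N such that ‖J(p) − p‖ ≤ 1/(f(n)+1) and, for all q ∈ B_N, if ‖J(q) − q‖ ≤ 1/(n+1) then ⟪u − p, q − p⟫ ≤ 1/(k+1), where R := 4N⁴(k+1)² and f̌(m) := max{ f(24N(m+1)²), 24N(m+1)² }. -/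
open scoped RealInnerProductSpace

lemma combo_eq {H : Type*} [NormedAddCommGroup H] [InnerProductSpace ℝ H]
    (a b : H) (t : ℝ) :
    ‖(1-t)•a + t•b‖^2 = (1-t)*‖a‖^2 + t*‖b‖^2 - t*(1-t)*‖b-a‖^2 := by
  have h1 := norm_add_sq_real ((1-t)•a) (t•b)
  rw [norm_smul, norm_smul, real_inner_smul_left, real_inner_smul_right] at h1
  simp only [Real.norm_eq_abs, mul_pow, sq_abs] at h1
  have h2 := norm_sub_sq_real b a
  have h3 := real_inner_comm a b
  linear_combination h1 + t*(1-t)*h2 - 2*t*(1-t)*h3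

lemma expand_eq {H : Type*} [NormedAddCommGroup H] [InnerProductSpace ℝ H]
    (u p q : H) (t : ℝ) :
    ‖u - ((1-t)•p + t•q)‖^2 = ‖u-p‖^2 - 2*t*⟪u-p, q-p⟫ + t^2*‖q-p‖^2 := by
  have h0 : u - ((1-t)•p + t•q) = (u-p) - t•(q-p) := by module
  rw [h0, norm_sub_sq_real, real_inner_smul_right, norm_smul]
  simp only [Real.norm_eq_abs, mul_pow, sq_abs]
  ring

lemma combo_sub {H : Type*} [NormedAddCommGroup H] [InnerProductSpace ℝ H]
    (x p q : H) (t : ℝ) :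
    ‖x - ((1-t)•p + t•q)‖^2 = (1-t)*‖x-p‖^2 + t*‖x-q‖^2 - t*(1-t)*‖q-p‖^2 := by
  have h0 : x - ((1-t)•p + t•q) = (1-t)•(x-p) + t•(x-q) := by module
  have h := combo_eq (x-p) (x-q) t
  rw [h0, h]
  have h2 : (x-q) - (x-p) = p - q := by abel
  rw [h2, norm_sub_rev p q]

lemma aux_sq_half (a c : ℝ) (h0 : 0 ≤ a) (h : 2*a ≤ c) : a^2 ≤ c^2/4 := by nlinarith

lemma aux_t1 (Nr kr : ℝ) (hNr1 : 1 ≤ Nr) (hkr0 : 0 ≤ kr) : 1/(4*Nr^2*(kr+1)) ≤ 1 := by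
  rw [div_le_one (by positivity)]
  nlinarith

lemma aux_defect (Nr kr X D ε t b : ℝ) (hNr1 : 1 ≤ Nr) (hkr0 : 0 ≤ kr) (hX1 : 1 ≤ X)
    (hD0 : 0 ≤ D) (hb0 : 0 ≤ b) (hb2N : b ≤ 2*Nr)
    (hε : ε = 1/(24*Nr*X^2+1)) (ht : t = 1/(4*Nr^2*(kr+1)))
    (hdef2 : D^2 ≤ 4*t*(1-t)*b*ε + ε^2) : D ≤ 1/X := by
  have hXpos : (0:ℝ) < X := by linarith
  have hden : (0:ℝ) < 24*Nr*X^2+1 := by positivity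
  have hεpos : 0 < ε := by rw [hε]; positivity
  have hε_eq : ε * (24*Nr*X^2+1) = 1 := by rw [hε]; field_simp
  have htpos : 0 < t := by rw [ht]; positivity
  have ht1 : t ≤ 1 := by rw [ht]; exact aux_t1 Nr kr hNr1 hkr0
  have hε1 : ε ≤ 1 := by nlinarith [mul_nonneg hεpos.le (by positivity : (0:ℝ) ≤ 24*Nr*X^2)]
  have h4tb : 4*t*b ≤ 2 := by
    have e : 4*t*b = (4*b)/(4*Nr^2*(kr+1)) := by rw [ht]; ring
    rw [e, div_le_iff₀ (by positivity)]
    nlinarith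
  have hd3 : D^2 ≤ 3*ε := by
    have h2 : 4*t*(1-t)*b ≤ 4*t*b := by nlinarith [mul_nonneg (mul_nonneg htpos.le htpos.le) hb0]
    have h1 : 4*t*(1-t)*b*ε ≤ 2*ε :=
      le_trans (mul_le_mul_of_nonneg_right (le_trans h2 h4tb) hεpos.le) (by linarith)
    nlinarith
  have h3ε : 3*ε*X^2 ≤ 1 := by
    nlinarith [mul_nonneg (by linarith : (0:ℝ) ≤ Nr - 1) (by positivity : (0:ℝ) ≤ 24*ε*X^2),
      mul_pos hεpos (by positivity : (0:ℝ) < X^2)]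
  rw [le_div_iff₀ hXpos]
  nlinarith [mul_nonneg hD0 hXpos.le, mul_le_mul_of_nonneg_right hd3 (by positivity : (0:ℝ) ≤ X^2)]

lemma aux_final (Nr kr b P δ t : ℝ) (hNr1 : 1 ≤ Nr) (hkr0 : 0 ≤ kr) (hb0 : 0 ≤ b)
    (hb2N : b ≤ 2*Nr) (ht : t = 1/(4*Nr^2*(kr+1))) (hδ : δ = 1/(16*Nr^2*(kr+1)^2))
    (hip : 2*t*P ≤ t^2*b^2 + 2*δ) : P ≤ 1/(kr+1) := by
  have hb2 : b^2 ≤ 4*Nr^2 := by nlinarith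
  have htpos : 0 < t := by rw [ht]; positivity
  have h2t : (0:ℝ) < 2*t := by linarith
  have hkpos : (0:ℝ) < kr + 1 := by linarith
  have key : P ≤ t*b^2/2 + δ/t := by
    calc P = (2*t*P)/(2*t) := (mul_div_cancel_left₀ P (ne_of_gt h2t)).symm
    _ ≤ (t^2*b^2 + 2*δ)/(2*t) := by gcongr
    _ = t*b^2/2 + δ/t := by
        field_simp
  have hT1 : t*b^2/2 ≤ 1/(2*(kr+1)) := by
    have e : t*b^2/2 = b^2/(2*(4*Nr^2*(kr+1))) := by
      rw [ht]; field_simp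
    rw [e, div_le_div_iff₀ (by positivity) (by positivity)]
    nlinarith [mul_le_mul_of_nonneg_right hb2 (by linarith : (0:ℝ) ≤ 2*(kr+1))]
  have hT2 : δ/t ≤ 1/(4*(kr+1)) := by
    have e : δ/t = (4*Nr^2*(kr+1))/(16*Nr^2*(kr+1)^2) := by
      rw [ht, hδ]
      field_simp
    rw [e, div_le_div_iff₀ (by positivity) (by positivity)]
    nlinarith [sq_nonneg Nr, sq_nonneg (kr+1)]
  have hsum : 1/(2*(kr+1)) + 1/(4*(kr+1)) ≤ 1/(kr+1) := by
    rw [div_add_div _ _ (by positivity : (2*(kr+1)) ≠ 0) (by positivity : (4*(kr+1)) ≠ 0)]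
    rw [div_le_div_iff₀ (by positivity) (by positivity)]
    ring_nf
    nlinarith [sq_nonneg (kr+1)]
  linarith

set_option maxHeartbeats 1000000 in
/-- Quantitative projection argument, inner-product form (Proposition 3.3): for a
nonexpansive `J` with fixed point `s`, `u ∈ H` and `N ≥ 2‖u - s‖`, for every `k` and
monotone `f` there are `n ≤ 24N(f̌^{(R)}(0)+1)²` (with `R := 4N⁴(k+1)²` and
`f̌(m) := max{f(24N(m+1)²), 24N(m+1)²}`) and `p ∈ B_N` such that
`‖J p - p‖ ≤ 1/(f n + 1)` and every `q ∈ B_N` with `‖J q - q‖ ≤ 1/(n+1)` satisfies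
`⟪u - p, q - p⟫ ≤ 1/(k+1)`. -/
theorem quantitative_projection_inner
    {H : Type*} [NormedAddCommGroup H] [InnerProductSpace ℝ H] [CompleteSpace H]
    (J : H → H) (hJ : ∀ x y : H, ‖J x - J y‖ ≤ ‖x - y‖)
    (s : H) (hs : J s = s) (u : H)
    (N : ℕ) (hN0 : N ≠ 0) (hNu : 2 * ‖u - s‖ ≤ (N : ℝ))
    (k : ℕ) (f : ℕ → ℕ) (hf : Monotone f) :
    ∃ n ≤ 24 * N *
        ((fun m => max (f (24*N*(m+1)^2)) (24*N*(m+1)^2))^[4 * N^4 * (k+1)^2] 0 + 1)^2,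
      ∃ p : H, ‖p - s‖ ≤ (N : ℝ) ∧
        ‖J p - p‖ ≤ 1 / ((f n : ℝ) + 1) ∧
        ∀ q : H, ‖q - s‖ ≤ (N : ℝ) → ‖J q - q‖ ≤ 1 / ((n : ℝ) + 1) →
          ⟪u - p, q - p⟫ ≤ 1 / ((k : ℝ) + 1) := by
  have hN1 : 1 ≤ N := Nat.one_le_iff_ne_zero.mpr hN0
  set F : ℕ → ℕ := fun m => max (f (24*N*(m+1)^2)) (24*N*(m+1)^2) with hF
  set R : ℕ := 4 * N^4 * (k+1)^2 with hR
  set r : ℕ → ℕ := fun i => F^[i] 0 with hr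
  have hFm : ∀ m, m ≤ F m := by
    intro m
    have h1 : m + 1 ≤ 24*N*(m+1)^2 := by nlinarith
    exact le_trans (Nat.le_succ m) (le_trans h1 (le_max_right _ _))
  have hrmono : Monotone r := by
    apply monotone_nat_of_le_succ
    intro i
    rw [hr]
    simp only [Function.iterate_succ_apply']
    exact hFm _
  set S : ℕ → Set H := fun m => {q : H | ‖q - s‖ ≤ (N:ℝ) ∧ ‖J q - q‖ ≤ 1/((m:ℝ)+1)} with hS
  have hsS : ∀ m, s ∈ S m := by
    intro m
    have h1 : ‖s - s‖ = 0 := by simp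
    have h2 : ‖J s - s‖ = 0 := by rw [hs]; simp
    exact ⟨by rw [h1]; positivity, by rw [h2]; positivity⟩
  set E : ℕ → ℝ := fun m => sInf ((fun q => ‖u - q‖^2) '' S m) with hE
  have hne : ∀ m, ((fun q => ‖u - q‖^2) '' S m).Nonempty := fun m => ⟨_, ⟨s, hsS m, rfl⟩⟩
  have hbdd : ∀ m, BddBelow ((fun q => ‖u - q‖^2) '' S m) := by
    intro m
    refine ⟨0, ?_⟩
    rintro x ⟨q, _, rfl⟩
    positivity
  have hE0 : ∀ m, 0 ≤ E m := by
    intro m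
    apply le_csInf (hne m)
    rintro x ⟨q, _, rfl⟩
    positivity
  have hEub : ∀ m, E m ≤ ‖u - s‖^2 := fun m => csInf_le (hbdd m) ⟨s, hsS m, rfl⟩
  have hElow : ∀ m, ∀ q ∈ S m, E m ≤ ‖u - q‖^2 := fun m q hq => csInf_le (hbdd m) ⟨q, hq, rfl⟩
  set Nr : ℝ := (N:ℝ) with hNr
  have hNr1 : (1:ℝ) ≤ Nr := by rw [hNr]; exact_mod_cast hN1
  set kr : ℝ := (k:ℝ) with hkr
  have hkr0 : (0:ℝ) ≤ kr := by rw [hkr]; positivity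
  set δ : ℝ := 1/(16*Nr^2*(kr+1)^2) with hδ
  have hNrpos : (0:ℝ) < Nr := by linarith
  have hδpos : 0 < δ := by rw [hδ]; positivity
  have hus : ‖u - s‖^2 ≤ Nr^2/4 := aux_sq_half _ _ (norm_nonneg _) hNu
  have hR1 : 1 ≤ R := by
    rw [hR]
    have h1 : 1 ≤ N^4 := Nat.one_le_pow _ _ (Nat.pos_of_ne_zero hN0)
    have h2 : 1 ≤ (k+1)^2 := Nat.one_le_pow _ _ (Nat.succ_pos k)
    nlinarith [h1, h2]
  have hpig : ∃ i < R, E (r (i+1)) ≤ E (r i) + δ := by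
    by_contra hcon
    push_neg at hcon
    have hind : ∀ j, j ≤ R → (j:ℝ) * δ ≤ E (r j) := by
      intro j
      induction j with
      | zero => intro _; simpa using hE0 (r 0)
      | succ j ih =>
        intro hj
        have h1 := hcon j hj
        have h2 := ih (Nat.le_of_succ_le hj)
        push_cast
        linarith
    have h1 := hcon (R-1) (Nat.sub_lt hR1 one_pos)
    have h2 := hind (R-1) (Nat.sub_le _ _)
    have h3 : R - 1 + 1 = R := Nat.succ_pred_eq_of_pos hR1
    rw [h3] at h1
    rw [Nat.cast_sub hR1, Nat.cast_one] at h2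
    have hRδ : (R:ℝ) * δ = Nr^2/4 := by
      rw [hδ, hR, hNr, hkr]
      push_cast
      field_simp
      ring
    have h5 := hEub (r R)
    linarith
  obtain ⟨i, hiR, hgap⟩ := hpig
  refine ⟨24*N*(r i+1)^2, ?_, ?_⟩
  · have h1 : r i ≤ r R := hrmono hiR.le
    have h2 : (r i + 1)^2 ≤ (r R + 1)^2 := Nat.pow_le_pow_left (by omega) 2
    exact Nat.mul_le_mul_left _ h2
  set n : ℕ := 24*N*(r i+1)^2 with hn
  have hlt : E (r (i+1)) < E (r (i+1)) + δ := by linarith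
  obtain ⟨x, ⟨p, hpS, rfl⟩, hplt⟩ := exists_lt_of_csInf_lt (hne (r (i+1))) hlt
  have hplt' : ‖u - p‖^2 < E (r (i+1)) + δ := hplt
  have hpu : ‖u - p‖^2 ≤ E (r i) + 2*δ := by linarith
  have hri1 : r (i+1) = F (r i) := by rw [hr]; simp [Function.iterate_succ_apply']
  have hfn_le : f n ≤ r (i+1) := by rw [hri1, hn]; exact le_max_left _ _
  have hn_le : n ≤ r (i+1) := by rw [hri1, hn]; exact le_max_right _ _
  refine ⟨p, hpS.1, ?_, ?_⟩
  · refine le_trans hpS.2 ?_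
    apply one_div_le_one_div_of_le
    · positivity
    · exact add_le_add (Nat.cast_le.mpr hfn_le) le_rfl
  intro q hqB hqfix
  set t : ℝ := 1/(4*Nr^2*(kr+1)) with ht
  have htpos : 0 < t := by rw [ht]; positivity
  have ht1 : t ≤ 1 := by rw [ht]; exact aux_t1 Nr kr hNr1 hkr0
  set ε : ℝ := 1/((n:ℝ)+1) with hε
  have hεpos : 0 < ε := by rw [hε]; positivity
  set X : ℝ := ((r i : ℕ):ℝ) + 1 with hX
  have hX1 : (1:ℝ) ≤ X := by
    rw [hX]
    have : (0:ℝ) ≤ ((r i : ℕ):ℝ) := Nat.cast_nonneg _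
    linarith
  have hnX : ((n:ℕ):ℝ) = 24*Nr*X^2 := by rw [hn, hX, hNr]; push_cast; ring
  have hεe : ε = 1/(24*Nr*X^2+1) := by rw [hε, hnX]
  have hpfix : ‖J p - p‖ ≤ ε := by
    refine le_trans hpS.2 ?_
    rw [hε]
    apply one_div_le_one_div_of_le
    · positivity
    · exact add_le_add (Nat.cast_le.mpr hn_le) le_rfl
  have hqfix' : ‖J q - q‖ ≤ ε := hqfix
  set b : ℝ := ‖q - p‖ with hb
  have hb0 : 0 ≤ b := norm_nonneg _
  have hb2N : b ≤ 2*Nr := by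
    have h0 : q - p = (q - s) + (s - p) := by abel
    rw [hb, h0]
    refine le_trans (norm_add_le _ _) ?_
    rw [norm_sub_rev s p]
    linarith [hqB, hpS.1]
  set m : H := (1-t)•p + t•q with hm
  have hmB : ‖m - s‖ ≤ Nr := by
    have h0 : m - s = (1-t)•(p-s) + t•(q-s) := by rw [hm]; module
    rw [h0]
    calc ‖(1-t)•(p-s) + t•(q-s)‖ ≤ ‖(1-t)•(p-s)‖ + ‖t•(q-s)‖ := norm_add_le _ _
    _ = (1-t)*‖p-s‖ + t*‖q-s‖ := by
        rw [norm_smul, norm_smul, Real.norm_eq_abs, Real.norm_eq_abs,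
          abs_of_nonneg (by linarith), abs_of_nonneg htpos.le]
    _ ≤ (1-t)*Nr + t*Nr := by
        apply add_le_add
        · exact mul_le_mul_of_nonneg_left hpS.1 (by linarith)
        · exact mul_le_mul_of_nonneg_left hqB htpos.le
    _ = Nr := by ring
  have hmp : ‖m - p‖ = t * b := by
    have h0 : m - p = t•(q-p) := by rw [hm]; module
    rw [h0, norm_smul, Real.norm_eq_abs, abs_of_nonneg htpos.le, hb]
  have hmq : ‖m - q‖ = (1-t) * b := by
    have h0 : m - q = (1-t)•(p-q) := by rw [hm]; module
    rw [h0, norm_smul, Real.norm_eq_abs, abs_of_nonneg (by linarith), hb, norm_sub_rev]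
  have hJmp : ‖J m - p‖ ≤ t*b + ε := by
    have h1 : ‖J m - p‖ ≤ ‖J m - J p‖ + ‖J p - p‖ := norm_sub_le_norm_sub_add_norm_sub _ _ _
    have h2 := hJ m p
    rw [hmp] at h2
    linarith
  have hJmq : ‖J m - q‖ ≤ (1-t)*b + ε := by
    have h1 : ‖J m - q‖ ≤ ‖J m - J q‖ + ‖J q - q‖ := norm_sub_le_norm_sub_add_norm_sub _ _ _
    have h2 := hJ m q
    rw [hmq] at h2
    linarith
  have hid := combo_sub (J m) p q t
  rw [← hm, ← hb] at hid
  have hA2 : ‖J m - p‖^2 ≤ (t*b + ε)^2 := pow_le_pow_left₀ (norm_nonneg _) hJmp 2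
  have hB2 : ‖J m - q‖^2 ≤ ((1-t)*b + ε)^2 := pow_le_pow_left₀ (norm_nonneg _) hJmq 2
  have hdef2 : ‖J m - m‖^2 ≤ 4*t*(1-t)*b*ε + ε^2 := by
    have h1 : (1-t)*‖J m - p‖^2 ≤ (1-t)*(t*b + ε)^2 :=
      mul_le_mul_of_nonneg_left hA2 (by linarith)
    have h2 : t*‖J m - q‖^2 ≤ t*((1-t)*b + ε)^2 :=
      mul_le_mul_of_nonneg_left hB2 htpos.le
    have h3 : (1-t)*(t*b + ε)^2 + t*((1-t)*b + ε)^2 - t*(1-t)*b^2 = 4*t*(1-t)*b*ε + ε^2 := by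
      ring
    linarith [h1, h2]
  have hdefX : ‖J m - m‖ ≤ 1/X :=
    aux_defect Nr kr X _ ε t b hNr1 hkr0 hX1 (norm_nonneg _) hb0 hb2N hεe ht hdef2
  have hmS : m ∈ S (r i) := by
    refine ⟨hmB, ?_⟩
    rw [hX] at hdefX
    exact hdefX
  have hEm := hElow (r i) m hmS
  have hexp := expand_eq u p q t
  rw [← hm, ← hb] at hexp
  have hip : 2*t*⟪u-p, q-p⟫ ≤ t^2*b^2 + 2*δ := by linarith [hexp, hEm, hpu, hgap]
  exact aux_final Nr kr b _ δ t hNr1 hkr0 hb0 hb2N ht hδ hip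
end

section
/- Let H be a real Hilbert space, J : H → H a nonexpansive map, s a fixed point of J, u ∈ H, and (z_n) a sequence in H. Let ξ : ℕ × ℕ^ℕ → ℕ be a monotone functional such that for every k ∈ ℕ and every monotone f : ℕ → ℕ there is n ≤ ξ(k,f) with ‖J(z_m) − z_m‖ ≤ 1/(k+1) for all m ∈ [n, n+f(n)]. Let N₀ ∈ ℕ be such that ‖z_n − s‖ ≤ N₀ for all n, and let N ≥ max{2‖u − s‖, N₀} with N ∈ ℕ \ {0}. Then for every k ∈ ℕ and every monotone function f : ℕ → ℕ there are n ≤ ψ(k,f) and p ∈ B_N such that ‖J(p) − p‖ ≤ 1/(f(n)+1) and ⟪p − u, p − z_{m+1}⟫ ≤ 1/(k+1) for all m ∈ [n, n+f(n)]; here ψ(k,f) := ξ(24N(ǧ^{(R)}(0)+1)², f+1) with R := N⁴(k+1)², ǧ(m) := max{ g(24N(m+1)²), 24N(m+1)² }, g(m) := f(ξ(m, f+1)), and f+1 denotes the function m ↦ f(m)+1. -/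
open scoped RealInnerProductSpace

/-- `g ≤* f` : strong majorization for functions `ℕ → ℕ`. -/
def FunMaj (g f : ℕ → ℕ) : Prop := ∀ n : ℕ, ∀ m ≤ n, g m ≤ f n ∧ f m ≤ f n

/-- A functional `Φ : ℕ × ℕ^ℕ → ℕ` is monotone. -/
def MonotoneFunctional (Φ : ℕ → (ℕ → ℕ) → ℕ) : Prop :=
  ∀ n : ℕ, ∀ f : ℕ → ℕ, ∀ m ≤ n, ∀ g : ℕ → ℕ, FunMaj g f → Φ m g ≤ Φ n f

/-- `g(m) := f(ξ(m, f+1))`. -/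
def gAux (ξ : ℕ → (ℕ → ℕ) → ℕ) (f : ℕ → ℕ) (m : ℕ) : ℕ := f (ξ m (fun i => f i + 1))

/-- `ǧ(m) := max{g(24N(m+1)²), 24N(m+1)²}`. -/
def gCheck (ξ : ℕ → (ℕ → ℕ) → ℕ) (N : ℕ) (f : ℕ → ℕ) (m : ℕ) : ℕ :=
  max (gAux ξ f (24*N*(m+1)^2)) (24*N*(m+1)^2)

/-- `ψ(k,f) := ξ(24N(ǧ^{(R)}(0)+1)², f+1)` with `R := N⁴(k+1)²`. -/
def psiAux (ξ : ℕ → (ℕ → ℕ) → ℕ) (N k : ℕ) (f : ℕ → ℕ) : ℕ :=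
  ξ (24 * N * ((gCheck ξ N f)^[N^4 * (k+1)^2] 0 + 1)^2) (fun i => f i + 1)

section
variable {H : Type*} [NormedAddCommGroup H] [InnerProductSpace ℝ H]

lemma norm_combo_sq (a x y : H) (t : ℝ) :
    ‖a - ((1-t)•x + t•y)‖^2 = (1-t)*‖a-x‖^2 + t*‖a-y‖^2 - t*(1-t)*‖x-y‖^2 := by
  have h1 : a - ((1-t)•x + t•y) = (1-t)•(a-x) + t•(a-y) := by module
  have h2 : x - y = (a - y) - (a - x) := by abel
  have h3 : ‖x-y‖^2 = ‖a-y‖^2 - 2*⟪a-y,a-x⟫ + ‖a-x‖^2 := by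
    rw [h2, norm_sub_sq_real]
  have h4 : ‖a - ((1-t)•x + t•y)‖^2
      = (1-t)^2*‖a-x‖^2 + 2*((1-t)*t)*⟪a-x,a-y⟫ + t^2*‖a-y‖^2 := by
    rw [h1, norm_add_sq_real, real_inner_smul_left, real_inner_smul_right,
      norm_smul, norm_smul]
    simp only [Real.norm_eq_abs, mul_pow, sq_abs]
    ring
  rw [h4, h3, real_inner_comm (a-y) (a-x)]
  ring

lemma norm_sub_smul_sq (a b : H) (t : ℝ) :
    ‖a - t•b‖^2 = ‖a‖^2 - 2*t*⟪a,b⟫ + t^2*‖b‖^2 := by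
  rw [norm_sub_sq_real, real_inner_smul_right, norm_smul]
  simp only [Real.norm_eq_abs, mul_pow, sq_abs]
  ring

lemma defect_combo (J : H → H) (hJ : ∀ x y : H, ‖J x - J y‖ ≤ ‖x - y‖)
    (x y : H) (t δ : ℝ) (ht0 : 0 ≤ t) (ht1 : t ≤ 1)
    (hx : ‖J x - x‖ ≤ δ) (hy : ‖J y - y‖ ≤ δ) :
    ‖J ((1-t)•x + t•y) - ((1-t)•x + t•y)‖^2 ≤ 4*t*(1-t)*‖x-y‖*δ + δ^2 := by
  have hwx : ((1-t)•x + t•y) - x = t•(y-x) := by module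
  have hwy : ((1-t)•x + t•y) - y = (1-t)•(x-y) := by module
  have hA : ‖J ((1-t)•x + t•y) - x‖ ≤ t*‖x-y‖ + δ := by
    calc ‖J ((1-t)•x + t•y) - x‖ ≤ ‖J ((1-t)•x + t•y) - J x‖ + ‖J x - x‖ :=
          norm_sub_le_norm_sub_add_norm_sub _ _ _
    _ ≤ ‖((1-t)•x + t•y) - x‖ + δ := add_le_add (hJ _ x) hx
    _ = t*‖x-y‖ + δ := by
        rw [hwx, norm_smul, norm_sub_rev y x, Real.norm_eq_abs, abs_of_nonneg ht0]
  have hB : ‖J ((1-t)•x + t•y) - y‖ ≤ (1-t)*‖x-y‖ + δ := by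
    calc ‖J ((1-t)•x + t•y) - y‖ ≤ ‖J ((1-t)•x + t•y) - J y‖ + ‖J y - y‖ :=
          norm_sub_le_norm_sub_add_norm_sub _ _ _
    _ ≤ ‖((1-t)•x + t•y) - y‖ + δ := add_le_add (hJ _ y) hy
    _ = (1-t)*‖x-y‖ + δ := by
        rw [hwy, norm_smul, Real.norm_eq_abs, abs_of_nonneg (by linarith : (0:ℝ) ≤ 1-t)]
  have hid := norm_combo_sq (J ((1-t)•x + t•y)) x y t
  have hA2 : ‖J ((1-t)•x + t•y) - x‖^2 ≤ (t*‖x-y‖ + δ)^2 :=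
    pow_le_pow_left₀ (norm_nonneg _) hA 2
  have hB2 : ‖J ((1-t)•x + t•y) - y‖^2 ≤ ((1-t)*‖x-y‖ + δ)^2 :=
    pow_le_pow_left₀ (norm_nonneg _) hB 2
  have e1 := mul_le_mul_of_nonneg_left hA2 (by linarith : (0:ℝ) ≤ 1-t)
  have e2 := mul_le_mul_of_nonneg_left hB2 ht0
  rw [hid]
  nlinarith [norm_nonneg (x-y), sq_nonneg (t*(1-t))]

end

set_option maxHeartbeats 2000000 in
/-- Proposition 3.4: elimination of sequential weak compactness. -/
theorem removal_weak_compactness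
    {H : Type*} [NormedAddCommGroup H] [InnerProductSpace ℝ H] [CompleteSpace H]
    (J : H → H) (hJ : ∀ x y : H, ‖J x - J y‖ ≤ ‖x - y‖)
    (s : H) (hs : J s = s) (u : H) (z : ℕ → H)
    (ξ : ℕ → (ℕ → ℕ) → ℕ) (hξmono : MonotoneFunctional ξ)
    (hξ : ∀ k : ℕ, ∀ f : ℕ → ℕ, Monotone f → ∃ n ≤ ξ k f,
      ∀ m : ℕ, n ≤ m → m ≤ n + f n → ‖J (z m) - z m‖ ≤ 1 / ((k : ℝ) + 1))
    (N₀ : ℕ) (hN₀ : ∀ n, ‖z n - s‖ ≤ (N₀ : ℝ))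
    (N : ℕ) (hN0 : N ≠ 0) (hNu : 2 * ‖u - s‖ ≤ (N : ℝ)) (hNN₀ : N₀ ≤ N)
    (k : ℕ) (f : ℕ → ℕ) (hf : Monotone f) :
    ∃ n ≤ psiAux ξ N k f, ∃ p : H, ‖p - s‖ ≤ (N : ℝ) ∧
      ‖J p - p‖ ≤ 1 / ((f n : ℝ) + 1) ∧
      ∀ m : ℕ, n ≤ m → m ≤ n + f n →
        ⟪p - u, p - z (m+1)⟫ ≤ 1 / ((k : ℝ) + 1) := by
  classical
  have hN1 : (1:ℝ) ≤ (N:ℝ) := by exact_mod_cast Nat.one_le_iff_ne_zero.mpr hN0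
  have hk1 : (0:ℝ) < (k:ℝ) + 1 := by positivity
  set F : ℕ → ℕ := fun i => f i + 1 with hFdef
  have hFmono : Monotone F := fun a b hab => Nat.add_le_add_right (hf hab) 1
  have hFmaj : FunMaj F F := fun n m hmn =>
    ⟨Nat.add_le_add_right (hf hmn) 1, Nat.add_le_add_right (hf hmn) 1⟩
  set R : ℕ := N^4 * (k+1)^2 with hRdef
  have hRpos : 0 < R := by
    have : 0 < N := Nat.pos_of_ne_zero hN0
    positivity
  set v : ℕ → ℕ := fun r => (gCheck ξ N f)^[r] 0 with hvdef
  set K : ℕ → ℕ := fun r => 24*N*(v r + 1)^2 with hKdef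
  have hvsucc : ∀ r, v (r+1) = gCheck ξ N f (v r) := fun r =>
    Function.iterate_succ_apply' _ _ _
  have hKv : ∀ r, K r ≤ v (r+1) := fun r => by
    rw [hvsucc r]; exact le_max_right _ _
  have hvK : ∀ r, v r ≤ K r := fun r => by
    have h1 : v r + 1 ≤ (v r + 1)^2 := Nat.le_self_pow two_ne_zero _
    have h2 : (v r + 1)^2 ≤ 24*N*(v r + 1)^2 :=
      Nat.le_mul_of_pos_left _ (by have := Nat.pos_of_ne_zero hN0; positivity)
    simp only [hKdef]; omega
  have hvmono : Monotone v := monotone_nat_of_le_succ fun r =>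
    le_trans (hvK r) (hKv r)
  -- choose the metastability witnesses
  have hexist : ∀ r : ℕ, ∃ n ≤ ξ (K r) F,
      ∀ m, n ≤ m → m ≤ n + F n → ‖J (z m) - z m‖ ≤ 1/((K r : ℝ)+1) :=
    fun r => hξ (K r) F hFmono
  choose nseq hnle hnint using hexist
  have hfn : ∀ r, f (nseq r) ≤ v (r+1) := fun r => by
    rw [hvsucc r]
    exact le_trans (hf (hnle r)) (le_max_left _ _)
  have hψ : psiAux ξ N k f = ξ (K R) F := rfl
  have hnψ : ∀ r, r ≤ R → nseq r ≤ psiAux ξ N k f := by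
    intro r hr
    have hKle : K r ≤ K R := by
      have := hvmono hr
      simp only [hKdef]
      exact Nat.mul_le_mul_left _ (Nat.pow_le_pow_left (by omega) 2)
    rw [hψ]
    exact le_trans (hnle r) (hξmono (K R) F (K r) hKle F hFmaj)
  by_contra hcon
  push_neg at hcon
  -- hcon : ∀ n ≤ ψ, ∀ p, ball → defect → ∃ m, ...
  set t : ℝ := 1/(4*(N:ℝ)^2*((k:ℝ)+1)) with htdef
  set δ : ℝ := 1/(4*(N:ℝ)^2*((k:ℝ)+1)^2) with hδdef
  have ht0 : 0 < t := by rw [htdef]; positivity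
  have ht1 : t ≤ 1 := by
    rw [htdef]
    rw [div_le_one (by positivity)]
    nlinarith
  have hδ0 : 0 < δ := by rw [hδdef]; positivity
  set P : ℕ → H → Prop := fun j x => ∃ m,
      (nseq (R-j-1) ≤ m ∧ m ≤ nseq (R-j-1) + f (nseq (R-j-1))) ∧
      1/((k:ℝ)+1) < ⟪x - u, x - z (m+1)⟫ with hPdef
  set q : ℕ → H := fun j => Nat.rec s
      (fun j qj => if h : P j qj then (1-t)•qj + t•(z (h.choose + 1)) else qj) j
      with hqdef
  have hq0 : q 0 = s := rfl
  have hqsucc : ∀ j, q (j+1) =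
      if h : P j (q j) then (1-t)•(q j) + t•(z (h.choose + 1)) else q j :=
    fun j => rfl
  clear_value q
  clear_value t δ
  have key : ∀ j, j ≤ R → ‖q j - s‖ ≤ (N₀:ℝ) ∧
      ‖J (q j) - q j‖ ≤ 1/((v (R-j):ℝ)+1) ∧
      ‖q j - u‖^2 ≤ ‖s-u‖^2 - (j:ℝ)*δ ∧
      (j ≠ 0 → ‖q j - u‖^2 < ‖s-u‖^2 - (j:ℝ)*δ) := by
    intro j
    induction j with
    | zero =>
        intro _
        refine ⟨by simp [hq0], by simp [hq0, hs]; positivity, by simp [hq0], by simp⟩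
    | succ j ih =>
        intro hj1
        have hjR : j < R := hj1
        obtain ⟨ihball, ihdef, ihb, _⟩ := ih (le_of_lt hjR)
        have hℓ1 : (R - j - 1) + 1 = R - j := by omega
        have hℓ2 : R - (j+1) = R - j - 1 := by omega
        -- the candidate index
        have hnb : nseq (R-j-1) ≤ psiAux ξ N k f := hnψ _ (by omega)
        -- defect good enough for the candidate
        have hfvb : (f (nseq (R-j-1)) : ℝ) ≤ (v (R-j) : ℝ) := by
          have := hfn (R-j-1); rw [hℓ1] at this; exact_mod_cast this
        have hdefcand : ‖J (q j) - q j‖ ≤ 1/((f (nseq (R-j-1)) : ℝ)+1) := by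
          refine le_trans ihdef ?_
          apply one_div_le_one_div_of_le (by positivity)
          linarith
        have hballN : ‖q j - s‖ ≤ (N:ℝ) :=
          le_trans ihball (by exact_mod_cast hNN₀)
        obtain ⟨m₀, hm₀1, hm₀2, hm₀3⟩ := hcon (nseq (R-j-1)) hnb (q j) hballN hdefcand
        have hP : P j (q j) := ⟨m₀, ⟨hm₀1, hm₀2⟩, hm₀3⟩
        have hqs : q (j+1) = (1-t)•(q j) + t•(z (hP.choose + 1)) := by
          rw [hqsucc j, dif_pos hP]
        obtain ⟨⟨hm1, hm2⟩, hip⟩ := hP.choose_spec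
        set m := hP.choose
        -- defect of z (m+1) at level K (R-j-1)
        have hzdef : ‖J (z (m+1)) - z (m+1)‖ ≤ 1/((K (R-j-1) : ℝ)+1) :=
          hnint (R-j-1) (m+1) (by omega) (by simp only [hFdef]; omega)
        -- defect of q j also below this level
        have hKvR : (K (R-j-1) : ℝ) ≤ (v (R-j) : ℝ) := by
          have := hKv (R-j-1); rw [hℓ1] at this; exact_mod_cast this
        have hqdefK : ‖J (q j) - q j‖ ≤ 1/((K (R-j-1) : ℝ)+1) := by
          refine le_trans ihdef ?_
          apply one_div_le_one_div_of_le (by positivity)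
          linarith
        -- distance bound
        have hzball : ‖z (m+1) - s‖ ≤ (N:ℝ) :=
          le_trans (hN₀ (m+1)) (by exact_mod_cast hNN₀)
        have hd2N : ‖q j - z (m+1)‖ ≤ 2*(N:ℝ) := by
          calc ‖q j - z (m+1)‖ ≤ ‖q j - s‖ + ‖s - z (m+1)‖ :=
                norm_sub_le_norm_sub_add_norm_sub _ _ _
          _ = ‖q j - s‖ + ‖z (m+1) - s‖ := by rw [norm_sub_rev s]
          _ ≤ (N:ℝ) + (N:ℝ) := add_le_add hballN hzball
          _ = 2*(N:ℝ) := by ring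
        constructor
        · -- ball invariant
          have h1 : q (j+1) - s = (1-t)•(q j - s) + t•(z (m+1) - s) := by
            rw [hqs]; module
          rw [h1]
          calc ‖(1-t)•(q j - s) + t•(z (m+1) - s)‖
              ≤ ‖(1-t)•(q j - s)‖ + ‖t•(z (m+1) - s)‖ := norm_add_le _ _
          _ = (1-t)*‖q j - s‖ + t*‖z (m+1) - s‖ := by
              rw [norm_smul, norm_smul, Real.norm_eq_abs, Real.norm_eq_abs,
                abs_of_nonneg (by linarith : (0:ℝ) ≤ 1-t), abs_of_nonneg ht0.le]
          _ ≤ (1-t)*(N₀:ℝ) + t*(N₀:ℝ) := by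
              have := hN₀ (m+1)
              have h1t : (0:ℝ) ≤ 1 - t := by linarith
              gcongr
          _ = (N₀:ℝ) := by ring
        constructor
        · -- defect invariant
          have hsq := defect_combo J hJ (q j) (z (m+1)) t (1/((K (R-j-1) : ℝ)+1))
            ht0.le ht1 hqdefK hzdef
          rw [← hqs] at hsq
          set δ₀ : ℝ := 1/((K (R-j-1) : ℝ)+1) with hδ₀def
          have hδ₀pos : 0 < δ₀ := by rw [hδ₀def]; positivity
          have hδ₀1 : δ₀ ≤ 1 := by
            rw [hδ₀def]
            rw [div_le_one (by positivity)]
            have : (0:ℝ) ≤ (K (R-j-1) : ℝ) := Nat.cast_nonneg _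
            linarith
          set V : ℝ := (v (R-j-1) : ℝ) + 1 with hVdef
          have hV1 : (1:ℝ) ≤ V := by
            rw [hVdef]; have : (0:ℝ) ≤ (v (R-j-1) : ℝ) := Nat.cast_nonneg _; linarith
          have hKcast : (K (R-j-1) : ℝ) = 24*(N:ℝ)*V^2 := by
            simp only [hKdef, hVdef]; push_cast; ring
          have hδ₀K : δ₀ ≤ 1/(24*(N:ℝ)*V^2) := by
            rw [hδ₀def]
            apply one_div_le_one_div_of_le (by positivity)
            rw [hKcast]; linarith
          have h4t : 4*t*(1-t) ≤ 1 := by nlinarith [sq_nonneg (2*t-1)]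
          have hdnn : (0:ℝ) ≤ ‖q j - z (m+1)‖ := norm_nonneg _
          have hbound : 4*t*(1-t)*‖q j - z (m+1)‖*δ₀ + δ₀^2 ≤ (1/V)^2 := by
            have s1 : 4*t*(1-t)*‖q j - z (m+1)‖ ≤ 2*(N:ℝ) := by
              nlinarith [mul_nonneg (mul_nonneg (by linarith : (0:ℝ) ≤ 4*t) (by linarith : (0:ℝ) ≤ 1-t)) hdnn]
            have s2 : 4*t*(1-t)*‖q j - z (m+1)‖*δ₀ ≤ 2*(N:ℝ)*δ₀ :=
              mul_le_mul_of_nonneg_right s1 hδ₀pos.le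
            have s3 : δ₀^2 ≤ (N:ℝ)*δ₀ := by nlinarith
            have s4 : 3*(N:ℝ)*δ₀ ≤ 3*(N:ℝ)*(1/(24*(N:ℝ)*V^2)) := by
              apply mul_le_mul_of_nonneg_left hδ₀K (by positivity)
            have s5 : 3*(N:ℝ)*(1/(24*(N:ℝ)*V^2)) = 1/(8*V^2) := by
              field_simp
              ring
            have s6 : 1/(8*V^2) ≤ (1/V)^2 := by
              have hV2 : ((1:ℝ)/V)^2 = 1/V^2 := by rw [div_pow, one_pow]
              rw [hV2]
              apply one_div_le_one_div_of_le (by positivity)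
              nlinarith
            linarith
          have hfinal : ‖J (q (j+1)) - q (j+1)‖^2 ≤ (1/V)^2 := le_trans hsq hbound
          have hnorm : ‖J (q (j+1)) - q (j+1)‖ ≤ 1/V := by
            have h := Real.sqrt_le_sqrt hfinal
            rwa [Real.sqrt_sq (norm_nonneg _), Real.sqrt_sq (by positivity : (0:ℝ) ≤ 1/V)] at h
          rw [hℓ2]
          exact hnorm
        · -- potential decrease
          have hdiff : q (j+1) - u = (q j - u) - t•(q j - z (m+1)) := by
            rw [hqs]; module
          have hb : ‖q (j+1) - u‖^2 = ‖q j - u‖^2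
              - 2*t*⟪q j - u, q j - z (m+1)⟫ + t^2*‖q j - z (m+1)‖^2 := by
            rw [hdiff, norm_sub_smul_sq]
          have hd2 : ‖q j - z (m+1)‖^2 ≤ (2*(N:ℝ))^2 :=
            pow_le_pow_left₀ (norm_nonneg _) hd2N 2
          have h2t : 2*t*(1/((k:ℝ)+1)) < 2*t*⟪q j - u, q j - z (m+1)⟫ := by
            apply mul_lt_mul_of_pos_left hip (by linarith)
          have heq1 : 2*t*(1/((k:ℝ)+1)) = 2*δ := by
            rw [htdef, hδdef]; field_simp
          have heq2 : t^2*(2*(N:ℝ))^2 = δ := by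
            rw [htdef, hδdef]; field_simp; ring
          have ht2d : t^2*‖q j - z (m+1)‖^2 ≤ δ := by
            calc t^2*‖q j - z (m+1)‖^2 ≤ t^2*(2*(N:ℝ))^2 :=
                  mul_le_mul_of_nonneg_left hd2 (sq_nonneg t)
            _ = δ := heq2
          have hstrict : ‖q (j+1) - u‖^2 < ‖s-u‖^2 - ((j:ℝ)+1)*δ := by
            rw [hb]
            nlinarith
          constructor
          · push_cast; linarith
          · intro _; push_cast; exact hstrict
  -- final contradiction
  obtain ⟨_, _, _, hstrict⟩ := key R le_rfl
  have h1 : ‖q R - u‖^2 < ‖s-u‖^2 - (R:ℝ)*δ := hstrict (Nat.pos_iff_ne_zero.mp hRpos)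
  have h2 : ‖s-u‖^2 ≤ (N:ℝ)^2/4 := by
    have : ‖s-u‖ ≤ (N:ℝ)/2 := by rw [norm_sub_rev]; linarith
    nlinarith [norm_nonneg (s-u)]
  have h3 : (R:ℝ)*δ = (N:ℝ)^2/4 := by
    rw [hδdef]
    simp only [hRdef]
    push_cast
    field_simp
  nlinarith [sq_nonneg ‖q R - u‖, norm_nonneg (q R - u), sq_abs ‖q R - u‖]
end

section
/- Let (s_n) be a sequence of nonnegative real numbers and D ∈ ℕ a positive upper bound on (s_n). Let (λ_n) ⊂ (0,1), (r_n), (v_n) be real sequences and (γ_n) ⊂ [0,∞), and let L : ℕ → ℕ be a monotone function satisfying ∑_{i=1}^{L(k)} λ_i ≥ k for all k ∈ ℕ. For natural numbers k, n, p assume: (i) for all m ∈ [n,p], v_m ≤ 1/(4(k+1)(p+1)) and r_m ≤ 1/(4(k+1)); (ii) for all m ∈ ℕ, ∑_{i=n}^{n+m} γ_i ≤ 1/(4(k+1)); (iii) for all m ∈ ℕ, s_{m+1} ≤ (1 − λ_m)(s_m + v_m) + λ_m r_m + γ_m. Then s_m ≤ 1/(k+1) for all m ∈ [σ(k,n), p],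 where σ(k,n) := L(n + ⌈ln(4D(k+1))⌉) + 1. -/
/-- Quantitative version of Xu's lemma (Lemma 3.5). -/
theorem quantitative_xu_lemma
    (s lam r v γ : ℕ → ℝ)
    (D : ℕ) (hD : 0 < D)
    (hs0 : ∀ n, 0 ≤ s n) (hsD : ∀ n, s n ≤ (D : ℝ))
    (hlam : ∀ n, lam n ∈ Set.Ioo (0:ℝ) 1)
    (hγ0 : ∀ n, 0 ≤ γ n)
    (L : ℕ → ℕ) (hL : Monotone L)
    (hLdiv : ∀ k : ℕ, (k : ℝ) ≤ ∑ i ∈ Finset.Icc 1 (L k), lam i)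
    (k n p : ℕ)
    (hi : ∀ m : ℕ, n ≤ m → m ≤ p →
      v m ≤ 1 / (4 * ((k:ℝ)+1) * ((p:ℝ)+1)) ∧ r m ≤ 1 / (4 * ((k:ℝ)+1)))
    (hii : ∀ m : ℕ, ∑ i ∈ Finset.Icc n (n+m), γ i ≤ 1 / (4 * ((k:ℝ)+1)))
    (hiii : ∀ m : ℕ, s (m+1) ≤ (1 - lam m) * (s m + v m) + lam m * r m + γ m) :
    ∀ m : ℕ, L (n + ⌈Real.log (4 * (D:ℝ) * ((k:ℝ)+1))⌉₊) + 1 ≤ m → m ≤ p →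
      s m ≤ 1 / ((k:ℝ)+1) := by
  intro m hm1 hm2
  set c : ℕ := ⌈Real.log (4 * (D:ℝ) * ((k:ℝ)+1))⌉₊ with hc
  set A : ℝ := 1 / (4 * ((k:ℝ)+1)) with hAdef
  set B : ℝ := 1 / (4 * ((k:ℝ)+1) * ((p:ℝ)+1)) with hBdef
  have hApos : 0 < A := by rw [hAdef]; positivity
  have hBpos : 0 < B := by rw [hBdef]; positivity
  -- L j ≥ j
  have hLj : ∀ j : ℕ, j ≤ L j := by
    intro j
    have h2 : ∑ i ∈ Finset.Icc 1 (L j), lam i ≤ (L j : ℝ) := by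
      calc ∑ i ∈ Finset.Icc 1 (L j), lam i ≤ ∑ _i ∈ Finset.Icc 1 (L j), (1:ℝ) :=
        Finset.sum_le_sum (fun i _ => (hlam i).2.le)
      _ = ((L j : ℕ) : ℝ) := by simp
    exact_mod_cast (hLdiv j).trans h2
  have hnm : n + c + 1 ≤ m := le_trans (by have := hLj (n + c); omega) hm1
  have hnm' : n ≤ m := by omega
  -- main induction
  have key : ∀ q : ℕ, n ≤ q → q ≤ p + 1 →
      s q ≤ (∏ i ∈ Finset.Ico n q, (1 - lam i)) * D + ((q : ℝ) - n) * B
        + A * (1 - ∏ i ∈ Finset.Ico n q, (1 - lam i))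
        + ∑ i ∈ Finset.Ico n q, γ i := by
    intro q hq
    induction q, hq using Nat.le_induction with
    | base =>
      intro _
      simp only [Finset.Ico_self, Finset.prod_empty, Finset.sum_empty, sub_self]
      have := hsD n
      nlinarith [hsD n]
    | succ q hq ih =>
      intro hq1
      have hqp : q ≤ p := by omega
      have hIH := ih (by omega)
      obtain ⟨hv, hr⟩ := hi q hq hqp
      have hl0 : 0 < lam q := (hlam q).1
      have hl1 : lam q < 1 := (hlam q).2
      set P : ℝ := ∏ i ∈ Finset.Ico n q, (1 - lam i) with hPdef
      have hP0 : 0 ≤ P :=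
        Finset.prod_nonneg (fun i _ => by linarith [(hlam i).2])
      have hP1 : P ≤ 1 :=
        Finset.prod_le_one (fun i _ => by linarith [(hlam i).2])
          (fun i _ => by linarith [(hlam i).1])
      have hprod : ∏ i ∈ Finset.Ico n (q+1), (1 - lam i) = P * (1 - lam q) :=
        Finset.prod_Ico_succ_top hq _
      have hsum : ∑ i ∈ Finset.Ico n (q+1), γ i
          = (∑ i ∈ Finset.Ico n q, γ i) + γ q :=
        Finset.sum_Ico_succ_top hq _
      have hγsum : 0 ≤ ∑ i ∈ Finset.Ico n q, γ i :=
        Finset.sum_nonneg (fun i _ => hγ0 i)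
      have h3 := hiii q
      rw [hprod, hsum]
      push_cast
      have hsq := hs0 q
      nlinarith [mul_le_mul_of_nonneg_left hv (by linarith : (0:ℝ) ≤ 1 - lam q),
        mul_le_mul_of_nonneg_left hr hl0.le,
        mul_le_mul_of_nonneg_left hIH (by linarith : (0:ℝ) ≤ 1 - lam q),
        mul_nonneg (mul_nonneg (by linarith : (0:ℝ) ≤ lam q) (by exact sub_nonneg.mpr (by exact_mod_cast hq) : (0:ℝ) ≤ ((q:ℝ) - n))) hBpos.le,
        mul_nonneg hl0.le hγsum]
  -- apply the key bound at m
  have hkey := key m hnm' (by omega)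
  set P : ℝ := ∏ i ∈ Finset.Ico n m, (1 - lam i) with hPdef
  have hP0 : 0 ≤ P :=
    Finset.prod_nonneg (fun i _ => by linarith [(hlam i).2])
  -- sum of lam over Ico n m is at least c
  have hsum1 : ((n + c : ℕ) : ℝ) ≤ ∑ i ∈ Finset.Ico 0 m, lam i := by
    refine (hLdiv (n + c)).trans ?_
    refine Finset.sum_le_sum_of_subset_of_nonneg ?_ (fun i _ _ => (hlam i).1.le)
    intro i hi
    simp only [Finset.mem_Icc] at hi
    simp only [Finset.mem_Ico]
    omega
  have hsum2 : ∑ i ∈ Finset.Ico 0 n, lam i ≤ (n : ℝ) := by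
    calc ∑ i ∈ Finset.Ico 0 n, lam i ≤ ∑ _i ∈ Finset.Ico 0 n, (1:ℝ) :=
      Finset.sum_le_sum (fun i _ => (hlam i).2.le)
    _ = (n : ℝ) := by simp
  have hsplit : (∑ i ∈ Finset.Ico 0 n, lam i) + ∑ i ∈ Finset.Ico n m, lam i
      = ∑ i ∈ Finset.Ico 0 m, lam i :=
    Finset.sum_Ico_consecutive _ (Nat.zero_le n) hnm'
  have hsumc : (c : ℝ) ≤ ∑ i ∈ Finset.Ico n m, lam i := by
    push_cast at hsum1
    linarith
  -- bound the product by exp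
  have hPexp : P ≤ Real.exp (-(∑ i ∈ Finset.Ico n m, lam i)) := by
    have h1 : P ≤ ∏ i ∈ Finset.Ico n m, Real.exp (-(lam i)) := by
      rw [hPdef]
      refine Finset.prod_le_prod (fun i _ => by linarith [(hlam i).2]) ?_
      intro i _
      have := Real.add_one_le_exp (-(lam i))
      linarith
    rw [← Real.exp_sum, Finset.sum_neg_distrib] at h1
    exact h1
  have hx : (0:ℝ) < 4 * (D:ℝ) * ((k:ℝ)+1) := by positivity
  have hlogc : Real.log (4 * (D:ℝ) * ((k:ℝ)+1)) ≤ (c : ℝ) := Nat.le_ceil _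
  have hPbound : P ≤ 1 / (4 * (D:ℝ) * ((k:ℝ)+1)) := by
    have h1 : Real.exp (-(∑ i ∈ Finset.Ico n m, lam i))
        ≤ Real.exp (-Real.log (4 * (D:ℝ) * ((k:ℝ)+1))) := by
      apply Real.exp_le_exp.mpr
      linarith
    have h2 : Real.exp (-Real.log (4 * (D:ℝ) * ((k:ℝ)+1)))
        = 1 / (4 * (D:ℝ) * ((k:ℝ)+1)) := by
      rw [Real.exp_neg, Real.exp_log hx, one_div]
    linarith [hPexp.trans h1]
  -- bound term 1
  have hT1 : P * D ≤ A := by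
    have := mul_le_mul_of_nonneg_right hPbound (by positivity : (0:ℝ) ≤ (D:ℝ))
    have hDpos : (0:ℝ) < (D:ℝ) := by exact_mod_cast hD
    rw [hAdef]
    calc P * D ≤ 1 / (4 * (D:ℝ) * ((k:ℝ)+1)) * D := this
    _ = 1 / (4 * ((k:ℝ)+1)) := by field_simp
  -- bound term 2
  have hT2 : ((m : ℝ) - n) * B ≤ A := by
    have hmn : ((m : ℝ) - n) ≤ (p : ℝ) + 1 := by
      have : (m : ℝ) ≤ (p : ℝ) := by exact_mod_cast hm2
      have : (0:ℝ) ≤ (n:ℝ) := by positivity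
      linarith
    have : ((m : ℝ) - n) * B ≤ ((p:ℝ) + 1) * B :=
      mul_le_mul_of_nonneg_right hmn hBpos.le
    have hBA : ((p:ℝ) + 1) * B = A := by
      rw [hAdef, hBdef]; field_simp
    linarith
  -- bound term 3
  have hT3 : A * (1 - P) ≤ A := by nlinarith
  -- bound term 4
  have hT4 : ∑ i ∈ Finset.Ico n m, γ i ≤ A := by
    rw [hAdef]
    refine le_trans ?_ (hii m)
    refine Finset.sum_le_sum_of_subset_of_nonneg ?_ (fun i _ _ => hγ0 i)
    intro i hi
    simp only [Finset.mem_Ico] at hi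
    simp only [Finset.mem_Icc]
    omega
  have hfinal : A + A + A + A = 1 / ((k:ℝ)+1) := by
    have hk : ((k:ℝ)+1) ≠ 0 := by positivity
    rw [hAdef]
    field_simp
    norm_num
  linarith
end

section
/- Let Ω be a bounded subset of a real Hilbert space H and (λ_n) ⊂ (0,1). For each p ∈ Ω let (s_{n,p}), (v_{n,p}), (r_{n,p}), (γ_{n,p}) be real sequences with (s_{n,p}), (γ_{n,p}) ⊂ [0,∞), such that for all p ∈ Ω and all m ∈ ℕ, s_{m+1,p} ≤ (1 − λ_m)(s_{m,p} + v_{m,p}) + λ_m r_{m,p} + γ_{m,p}. Let D ∈ ℕ and monotone functions L, G : ℕ → ℕ and a monotone functional Ψ : ℕ × ℕ^ℕ → ℕ satisfy: (i) ∑_{i=1}^{L(k)} λ_i ≥ k for all k; (ii) 0 < s_{n,p} ≤ D can fail but D ≥ 1 is an upper bound on (s_{n,p}) for all p ∈ Ω and n; (iii) for all p ∈ Ω and k, n ∈ ℕ, ∑_{i=G(k)+1}^{G(k)+n} γ_{i,p} ≤ 1/(k+1); (iv) for all k ∈ ℕ and all monotone f : ℕ → ℕ there exist p ∈ Ω and n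 ≤ Ψ(k,f) such that for all m ∈ [n, f(n)], v_{m,p} ≤ 1/(f(n)+1) and r_{m,p} ≤ 1/(k+1). Then for every k ∈ ℕ and every monotone f : ℕ → ℕ there are p ∈ Ω and n ≤ Θ(k,f) such that s_{m,p} ≤ 1/(k+1) for all m ∈ [n, f(n)], where Θ(k,f) := L(h(Ψ(4k+3, g))) + 1, h(m) := max{m, G(4k+3)+1} + ⌈ln(4D(k+1))⌉ and g(m) := 4(k+1)(f(L(h(m))+1)+1). -/
/-- `h(m) := max{m, G(4k+3)+1} + ⌈ln(4D(k+1))⌉`. -/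
noncomputable def hXu (G : ℕ → ℕ) (D k m : ℕ) : ℕ :=
  max m (G (4*k+3) + 1) + ⌈Real.log (4 * (D:ℝ) * ((k:ℝ)+1))⌉₊

/-- `g(m) := 4(k+1)(f(L(h(m))+1)+1)`. -/
noncomputable def gXu (L G : ℕ → ℕ) (D k : ℕ) (f : ℕ → ℕ) (m : ℕ) : ℕ :=
  4 * (k+1) * (f (L (hXu G D k m) + 1) + 1)

/-- `Θ(k,f) := L(h(Ψ(4k+3,g))) + 1`. -/
noncomputable def ThetaXu (L G : ℕ → ℕ) (Ψ : ℕ → (ℕ → ℕ) → ℕ) (D k : ℕ) (f : ℕ → ℕ) : ℕ :=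
  L (hXu G D k (Ψ (4*k+3) (gXu L G D k f))) + 1

lemma auxFracXu (F c : ℝ) (hF : 0 ≤ F) (hc : 0 < c) :
    F * (1 / (c * (F + 1) + 1)) ≤ 1 / c := by
  rw [mul_one_div, div_le_div_iff₀ (by positivity) hc]
  nlinarith

set_option maxHeartbeats 1000000 in
/-- Lemma 3.6: quantitative Xu lemma for families indexed by points of a bounded set. -/
theorem quantitative_xu_lemma_families
    {H : Type*} [NormedAddCommGroup H] [InnerProductSpace ℝ H] [CompleteSpace H]
    (Ω : Set H) (hΩ : Bornology.IsBounded Ω)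
    (lam : ℕ → ℝ) (hlam : ∀ n, lam n ∈ Set.Ioo (0:ℝ) 1)
    (s v r γ : ℕ → H → ℝ)
    (hs0 : ∀ p ∈ Ω, ∀ n, 0 ≤ s n p)
    (hγ0 : ∀ p ∈ Ω, ∀ n, 0 ≤ γ n p)
    (hrec : ∀ p ∈ Ω, ∀ m : ℕ,
      s (m+1) p ≤ (1 - lam m) * (s m p + v m p) + lam m * r m p + γ m p)
    (D : ℕ) (hD : 0 < D)
    (L G : ℕ → ℕ) (hL : Monotone L) (hG : Monotone G)
    (Ψ : ℕ → (ℕ → ℕ) → ℕ) (hΨ : MonotoneFunctional Ψ)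
    (hi : ∀ k : ℕ, (k : ℝ) ≤ ∑ i ∈ Finset.Icc 1 (L k), lam i)
    (hii : ∀ p ∈ Ω, ∀ n, s n p ≤ (D : ℝ))
    (hiii : ∀ p ∈ Ω, ∀ k n : ℕ,
      ∑ i ∈ Finset.Icc (G k + 1) (G k + n), γ i p ≤ 1 / ((k:ℝ)+1))
    (hiv : ∀ k : ℕ, ∀ f : ℕ → ℕ, Monotone f → ∃ p ∈ Ω, ∃ n ≤ Ψ k f,
      ∀ m : ℕ, n ≤ m → m ≤ f n →
        v m p ≤ 1 / ((f n : ℝ) + 1) ∧ r m p ≤ 1 / ((k:ℝ)+1)) :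
    ∀ k : ℕ, ∀ f : ℕ → ℕ, Monotone f → ∃ p ∈ Ω, ∃ n ≤ ThetaXu L G Ψ D k f,
      ∀ m : ℕ, n ≤ m → m ≤ f n → s m p ≤ 1 / ((k:ℝ)+1) := by
  intro k f hf
  have hl0 : ∀ i, 0 ≤ lam i := fun i => (hlam i).1.le
  have hl1 : ∀ i, lam i ≤ 1 := fun i => (hlam i).2.le
  have hhmono : Monotone (hXu G D k) := by
    intro x y hxy
    unfold hXu
    exact Nat.add_le_add_right (max_le_max hxy le_rfl) _
  have hgmono : Monotone (gXu L G D k f) := by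
    intro x y hxy
    unfold gXu
    have := hf (Nat.add_le_add_right (hL (hhmono hxy)) 1)
    exact Nat.mul_le_mul_left _ (Nat.add_le_add_right this 1)
  obtain ⟨p, hp, n₀, hn₀, hwin⟩ := hiv (4*k+3) (gXu L G D k f) hgmono
  set c : ℕ := ⌈Real.log (4 * (D:ℝ) * ((k:ℝ)+1))⌉₊ with hcdef
  set a : ℕ := max n₀ (G (4*k+3) + 1) with hadef
  set N : ℕ := a + c with hNdef
  have hNval : hXu G D k n₀ = N := rfl
  set n : ℕ := L N + 1 with hndef
  have hgn : gXu L G D k f n₀ = 4*(k+1)*(f n + 1) := rfl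
  refine ⟨p, hp, n, ?_, ?_⟩
  · unfold ThetaXu
    have h1 : hXu G D k n₀ ≤ hXu G D k (Ψ (4*k+3) (gXu L G D k f)) := hhmono hn₀
    rw [hNval] at h1
    exact Nat.add_le_add_right (hL h1) 1
  -- basic facts
  have ha1 : 1 ≤ a := le_trans (Nat.succ_le_succ (Nat.zero_le _)) (le_max_right _ _)
  have haG : G (4*k+3) + 1 ≤ a := le_max_right _ _
  have han₀ : n₀ ≤ a := le_max_left _ _
  have haN : a ≤ N := Nat.le_add_right _ _
  -- N ≤ L N
  have hNLN : N ≤ L N := by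
    have h1 := hi N
    have h2 : ∑ i ∈ Finset.Icc 1 (L N), lam i ≤ (L N : ℝ) := by
      calc ∑ i ∈ Finset.Icc 1 (L N), lam i ≤ ∑ i ∈ Finset.Icc 1 (L N), (1:ℝ) :=
            Finset.sum_le_sum fun i _ => hl1 i
        _ = ((L N : ℕ) : ℝ) := by
            rw [Finset.sum_const, Nat.card_Icc]
            simp
    exact_mod_cast le_trans h1 h2
  -- real constants
  set V : ℝ := 1 / ((gXu L G D k f n₀ : ℝ) + 1) with hVdef
  set R : ℝ := 1 / ((4*(k:ℝ)+3) + 1) with hRdef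
  have hV0 : 0 ≤ V := by positivity
  have hR0 : 0 ≤ R := by positivity
  have hwin' : ∀ m : ℕ, a ≤ m → m ≤ f n → v m p ≤ V ∧ r m p ≤ R := by
    intro m ham hmf
    have hmg : m ≤ gXu L G D k f n₀ := by
      rw [hgn]
      calc m ≤ f n := hmf
        _ ≤ 1 * (f n + 1) := by omega
        _ ≤ 4*(k+1)*(f n + 1) := Nat.mul_le_mul_right _ (by omega)
    have := hwin m (le_trans han₀ ham) hmg
    constructor
    · exact this.1
    · have h2 := this.2
      have : ((4*k+3 : ℕ) : ℝ) + 1 = (4*(k:ℝ)+3) + 1 := by push_cast; ring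
      rw [hRdef, ← this]
      exact h2
  -- the product
  set P : ℕ → ℝ := fun m => ∏ j ∈ Finset.Ico a m, (1 - lam j) with hPdef
  have hP0 : ∀ m, 0 ≤ P m := fun m =>
    Finset.prod_nonneg fun j _ => by linarith [hl1 j]
  have hP1 : ∀ m, P m ≤ 1 :=
    fun m => Finset.prod_le_one (fun j _ => by linarith [hl1 j]) (fun j _ => by linarith [hl0 j])
  have hclog : Real.log (4 * (D:ℝ) * ((k:ℝ)+1)) ≤ (c:ℝ) := Nat.le_ceil _
  clear_value c a N n V R P
  -- key induction
  have key : ∀ m, a ≤ m → m ≤ f n →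
      s m p ≤ P m * s a p + ((m : ℝ) - (a : ℝ)) * V + (1 - P m) * R
        + ∑ i ∈ Finset.Ico a m, γ i p := by
    intro m ham
    induction m, ham using Nat.le_induction with
    | base =>
      intro _
      simp only [hPdef, Finset.Ico_self, Finset.prod_empty, Finset.sum_empty]
      norm_num
    | succ m ham ih =>
      intro hm1
      have hmf : m ≤ f n := Nat.le_of_succ_le hm1
      have IH := ih hmf
      obtain ⟨hv, hr⟩ := hwin' m ham hmf
      have hPsucc : P (m+1) = P m * (1 - lam m) := by
        simp only [hPdef]; exact Finset.prod_Ico_succ_top ham _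
      have hGsucc : ∑ i ∈ Finset.Ico a (m+1), γ i p
          = (∑ i ∈ Finset.Ico a m, γ i p) + γ m p := Finset.sum_Ico_succ_top ham _
      have hΓ0 : 0 ≤ ∑ i ∈ Finset.Ico a m, γ i p :=
        Finset.sum_nonneg fun i _ => hγ0 p hp i
      have h0 : (0:ℝ) ≤ 1 - lam m := by linarith [hl1 m]
      have h0' : 0 ≤ lam m := hl0 m
      have hmaR : (0:ℝ) ≤ (m:ℝ) - (a:ℝ) := by
        have := (Nat.cast_le (α := ℝ)).2 ham; linarith
      have h1 := hrec p hp m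
      have h2 : s (m+1) p ≤ (1 - lam m) * ((P m * s a p + ((m : ℝ) - (a : ℝ)) * V
          + (1 - P m) * R + ∑ i ∈ Finset.Ico a m, γ i p) + V) + lam m * R + γ m p := by
        calc s (m+1) p ≤ (1 - lam m) * (s m p + v m p) + lam m * r m p + γ m p := h1
          _ ≤ _ := by gcongr <;> linarith
      rw [hPsucc, hGsucc]
      have e1 : 0 ≤ lam m * ((((m:ℝ) - (a:ℝ)) + 1) * V) := by positivity
      have e2 : 0 ≤ lam m * ∑ i ∈ Finset.Ico a m, γ i p := by positivity
      push_cast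
      nlinarith [e1, e2]
  -- final bounds
  intro m hnm hmfn
  have hLNm : L N + 1 ≤ m := by omega
  have ham : a ≤ m := le_trans haN (le_trans hNLN (by omega))
  have hkey := key m ham hmfn
  set x : ℝ := 4 * (D:ℝ) * ((k:ℝ)+1) with hxdef
  have hx0 : (0:ℝ) < x := by positivity
  have hx4 : (1:ℝ) ≤ x := by
    have hD1 : (1:ℝ) ≤ (D:ℝ) := by exact_mod_cast hD
    nlinarith
  -- (A) product bound
  have hsumlam : Real.log x ≤ ∑ i ∈ Finset.Ico a m, lam i := by
    have hsub : Finset.Icc 1 (L N) ⊆ Finset.Ico 1 m := by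
      intro i hi'
      simp only [Finset.mem_Icc, Finset.mem_Ico] at *
      omega
    have hclogx : Real.log x ≤ (c:ℝ) := hclog
    have h1 : (N:ℝ) ≤ ∑ i ∈ Finset.Ico 1 m, lam i :=
      le_trans (hi N) (Finset.sum_le_sum_of_subset_of_nonneg hsub fun i _ _ => hl0 i)
    have h2 : ∑ i ∈ Finset.Ico 1 a, lam i + ∑ i ∈ Finset.Ico a m, lam i
        = ∑ i ∈ Finset.Ico 1 m, lam i := Finset.sum_Ico_consecutive _ ha1 ham
    have h3 : ∑ i ∈ Finset.Ico 1 a, lam i ≤ (a:ℝ) - 1 := by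
      calc ∑ i ∈ Finset.Ico 1 a, lam i ≤ ∑ i ∈ Finset.Ico 1 a, (1:ℝ) :=
            Finset.sum_le_sum fun i _ => hl1 i
        _ = ((a - 1 : ℕ) : ℝ) := by rw [Finset.sum_const, Nat.card_Ico]; simp
        _ = (a:ℝ) - 1 := by rw [Nat.cast_sub ha1]; simp
    have hNc : (N:ℝ) = (a:ℝ) + (c:ℝ) := by rw [hNdef]; push_cast; ring
    linarith
  have hPm : P m ≤ 1 / x := by
    have hple : P m ≤ Real.exp (-(∑ i ∈ Finset.Ico a m, lam i)) := by
      have h1 : P m ≤ ∏ j ∈ Finset.Ico a m, Real.exp (-(lam j)) := by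
        simp only [hPdef]
        apply Finset.prod_le_prod (fun j _ => by linarith [hl1 j])
        intro j _
        have := Real.add_one_le_exp (-(lam j))
        linarith
      have h2 : ∏ j ∈ Finset.Ico a m, Real.exp (-(lam j))
          = Real.exp (∑ j ∈ Finset.Ico a m, -(lam j)) := (Real.exp_sum _ _).symm
      rw [h2, Finset.sum_neg_distrib] at h1
      exact h1
    have h3 : Real.exp (-(∑ i ∈ Finset.Ico a m, lam i)) ≤ Real.exp (-(Real.log x)) :=
      Real.exp_le_exp.2 (by linarith)
    have h4 : Real.exp (-(Real.log x)) = 1 / x := by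
      rw [Real.exp_neg, Real.exp_log hx0, one_div]
    linarith
  have hA : P m * s a p ≤ 1 / (4*((k:ℝ)+1)) := by
    have hD0 : (0:ℝ) < (D:ℝ) := by exact_mod_cast hD
    have h1 : P m * s a p ≤ (1/x) * (D:ℝ) :=
      mul_le_mul hPm (hii p hp a) (hs0 p hp a) (by positivity)
    have h2 : (1/x) * (D:ℝ) = 1 / (4*((k:ℝ)+1)) := by
      rw [hxdef]; field_simp
    linarith
  -- (B) v bound
  have hB : ((m:ℝ) - (a:ℝ)) * V ≤ 1 / (4*((k:ℝ)+1)) := by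
    have hmF : (m:ℝ) - (a:ℝ) ≤ (f n : ℝ) := by
      have h1 : (m:ℝ) ≤ (f n : ℝ) := by exact_mod_cast hmfn
      have h2 : (0:ℝ) ≤ (a:ℝ) := by positivity
      linarith
    have hma0 : (0:ℝ) ≤ (m:ℝ) - (a:ℝ) := by
      have := (Nat.cast_le (α := ℝ)).2 ham; linarith
    have hgval : ((gXu L G D k f n₀ : ℕ) : ℝ) = 4*((k:ℝ)+1)*((f n : ℝ)+1) := by
      rw [hgn]; push_cast; ring
    have h1 : ((m:ℝ) - (a:ℝ)) * V ≤ (f n : ℝ) * V := by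
      apply mul_le_mul_of_nonneg_right hmF hV0
    have hF0 : (0:ℝ) ≤ (f n : ℝ) := by positivity
    have h2 : (f n : ℝ) * V ≤ 1 / (4*((k:ℝ)+1)) := by
      rw [hVdef, hgval]
      exact auxFracXu _ _ hF0 (by positivity)
    linarith
  -- (C) r bound
  have hRval : R ≤ 1 / (4*((k:ℝ)+1)) := by
    have : (4*(k:ℝ)+3) + 1 = 4*((k:ℝ)+1) := by ring
    rw [hRdef, this]
  have hC : (1 - P m) * R ≤ 1 / (4*((k:ℝ)+1)) := by
    have h1 : (1 - P m) * R ≤ 1 * R :=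
      mul_le_mul_of_nonneg_right (by linarith [hP0 m]) hR0
    linarith
  -- (D) gamma bound
  have hD4 : ∑ i ∈ Finset.Ico a m, γ i p ≤ 1 / (4*((k:ℝ)+1)) := by
    have hGm : G (4*k+3) ≤ m - 1 := by omega
    have hsub : Finset.Ico a m ⊆
        Finset.Icc (G (4*k+3) + 1) (G (4*k+3) + (m - 1 - G (4*k+3))) := by
      intro i hi'
      simp only [Finset.mem_Ico, Finset.mem_Icc] at *
      omega
    have h1 : ∑ i ∈ Finset.Ico a m, γ i p
        ≤ ∑ i ∈ Finset.Icc (G (4*k+3) + 1) (G (4*k+3) + (m - 1 - G (4*k+3))), γ i p :=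
      Finset.sum_le_sum_of_subset_of_nonneg hsub fun i _ _ => hγ0 p hp i
    have h2 := hiii p hp (4*k+3) (m - 1 - G (4*k+3))
    have h3 : 1 / (((4*k+3 : ℕ) : ℝ) + 1) = 1 / (4*((k:ℝ)+1)) := by
      push_cast; ring_nf
    rw [h3] at h2
    linarith
  have hfinal : 1 / (4*((k:ℝ)+1)) * 4 = 1 / ((k:ℝ)+1) := by
    field_simp
  linarith [hkey, hA, hB, hC, hD4]
end

section
/- Let H be a real Hilbert space, T : H → 2^H a maximal monotone operator with s ∈ S := T⁻¹(0), and let (z_n) be generated by the iteration (mPPA): z_{n+1} = λ_n u + γ_n z_n + δ_n J_{c_n}(z_n) + e_n, where u, z₀ ∈ H, (λ_n), (γ_n), (δ_n) ⊂ (0,1) with λ_n + γ_n + δ_n = 1, c_n > 0 and e_n ∈ H. Assume there are a, c ∈ ℕ \ {0} and monotone functions ℓ, Γ, E : ℕ → ℕ with: (Q1) λ_n ≤ 1/(k+1) for all n ≥ ℓ(k); (Q3) 1/a ≤ γ_m ≤ 1 − 1/a for all m; (Q4) c_n ≥ 1/c for all n; (Q5) |c_{n+1} − c_n| ≤ 1/(k+1)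 for all n ≥ Γ(k); (Q6) ∑_{i=E(k)+1}^{E(k)+n} ‖e_i‖ ≤ 1/(k+1) for all k, n. Let N₁, N₂, N₃ ∈ ℕ be such that N₁ ≥ ‖u‖, N₂ ≥ ∑_{i=0}^{E(0)} ‖e_i‖ + 1, and N₃ ≥ max{‖u − s‖, ‖z₀ − s‖}; set N₀ := N₂ + N₃. Then: ‖z_n − s‖ ≤ N₀ for all n; moreover, writing z_{n+1} = γ_n z_n + (1 − γ_n) w_n (i.e. w_n := (z_{n+1} − γ_n z_n)/(1 − γ_n)), one has ‖w_n − s‖ ≤ 2aN₀ for all n, and for every k ∈ ℕ and every n ≥ ν(k), ‖w_{n+1} − w_n‖ − ‖z_{n+1} − z_n‖ ≤ 1/(k+1), where ν(k) := max{ Γ(10acN₀(k+1)), ℓ(10a(N₀+N₁+N₃)(k+1)), E(5a(k+1)) + 1 }. -/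
open scoped Pointwise RealInnerProductSpace

/-- `ν(k) := max{Γ(10acN₀(k+1)), ℓ(10a(N₀+N₁+N₃)(k+1)), E(5a(k+1))+1}`. -/
def nuFun (ℓ Γ E : ℕ → ℕ) (a c N₀ N₁ N₃ k : ℕ) : ℕ :=
  max (Γ (10*a*c*N₀*(k+1))) (max (ℓ (10*a*(N₀+N₁+N₃)*(k+1))) (E (5*a*(k+1)) + 1))

set_option maxHeartbeats 4000000

section aux
variable {H : Type*} [NormedAddCommGroup H] [InnerProductSpace ℝ H]
  {T : H → Set H} {J : ℝ → H → H}

lemma resolvent_unique (hmono : IsMonotoneOp T) (hJ : IsResolventFamilyOf J T)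
    {c : ℝ} (hc : 0 < c) {x y : H} (hxy : x - y ∈ c • T y) : J c x = y := by
  obtain ⟨v, hv, hveq⟩ := hxy
  obtain ⟨v', hv', hveq'⟩ := hJ c hc x
  replace hveq : c • v = x - y := hveq
  replace hveq' : c • v' = x - J c x := hveq'
  have h := hmono _ _ _ _ hv' hv
  have hd : c • (v' - v) = y - J c x := by
    rw [smul_sub, hveq, hveq']; abel
  have h2 : ⟪J c x - y, c • (v' - v)⟫ ≥ 0 := by
    rw [real_inner_smul_right]
    exact mul_nonneg hc.le h
  rw [hd] at h2
  have h3 : ⟪J c x - y, y - J c x⟫ = -‖J c x - y‖^2 := by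
    rw [show y - J c x = -(J c x - y) by abel, inner_neg_right,
      real_inner_self_eq_norm_sq]
  have : ‖J c x - y‖^2 ≤ 0 := by rw [h3] at h2; linarith
  have : ‖J c x - y‖ = 0 := by nlinarith [norm_nonneg (J c x - y)]
  have := norm_eq_zero.mp this
  rwa [sub_eq_zero] at this

lemma resolvent_nonexp (hmono : IsMonotoneOp T) (hJ : IsResolventFamilyOf J T)
    {c : ℝ} (hc : 0 < c) (x y : H) : ‖J c x - J c y‖ ≤ ‖x - y‖ := by
  obtain ⟨v, hv, hveq⟩ := hJ c hc x
  obtain ⟨v', hv', hveq'⟩ := hJ c hc y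
  replace hveq : c • v = x - J c x := hveq
  replace hveq' : c • v' = y - J c y := hveq'
  have h := hmono _ _ _ _ hv hv'
  set d := J c x - J c y with hdd
  have hcd : c • (v - v') = (x - y) - d := by
    rw [smul_sub, hveq, hveq', hdd]; abel
  have h2 : (0:ℝ) ≤ ⟪d, (x - y) - d⟫ := by
    rw [← hcd, real_inner_smul_right]
    exact mul_nonneg hc.le h
  have h3 : ‖d‖^2 ≤ ⟪d, x - y⟫ := by
    rw [inner_sub_right, real_inner_self_eq_norm_sq] at h2; linarith
  have h4 : ⟪d, x - y⟫ ≤ ‖d‖ * ‖x - y‖ := real_inner_le_norm d (x - y)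
  rcases eq_or_lt_of_le (norm_nonneg d) with h0 | h0
  · rw [← h0]; exact norm_nonneg _
  · nlinarith

lemma resolvent_diff (hmono : IsMonotoneOp T) (hJ : IsResolventFamilyOf J T)
    {c₁ c₂ : ℝ} (h₁ : 0 < c₁) (h₂ : 0 < c₂) (x : H) :
    ‖J c₁ x - J c₂ x‖ ≤ |c₂ - c₁| / c₂ * ‖x - J c₂ x‖ := by
  set y := J c₂ x with hy
  obtain ⟨v, hv, hveq⟩ := hJ c₂ h₂ x
  replace hveq : c₂ • v = x - J c₂ x := hveq
  set x' := y + (c₁/c₂) • (x - y) with hx'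
  have hmem : x' - y ∈ c₁ • T y := by
    refine ⟨v, hv, ?_⟩
    show c₁ • v = x' - y
    have h5 : (c₁/c₂) • (c₂ • v) = c₁ • v := by
      rw [smul_smul, div_mul_cancel₀ _ h₂.ne']
    rw [hx', ← h5, hveq]; abel
  have hJx' : J c₁ x' = y := resolvent_unique hmono hJ h₁ hmem
  calc ‖J c₁ x - y‖ = ‖J c₁ x - J c₁ x'‖ := by rw [hJx']
    _ ≤ ‖x - x'‖ := resolvent_nonexp hmono hJ h₁ x x'
    _ = ‖(1 - c₁/c₂) • (x - y)‖ := by rw [hx']; congr 1; module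
    _ = |c₂ - c₁| / c₂ * ‖x - y‖ := by
        rw [norm_smul, Real.norm_eq_abs]
        congr 1
        have h6 : 1 - c₁/c₂ = (c₂ - c₁)/c₂ := by field_simp
        rw [h6, abs_div, abs_of_pos h₂]

lemma resolvent_fix (hmono : IsMonotoneOp T) (hJ : IsResolventFamilyOf J T)
    {s : H} (hs : (0:H) ∈ T s) {c : ℝ} (hc : 0 < c) : J c s = s := by
  apply resolvent_unique hmono hJ hc
  exact ⟨0, hs, by simp⟩

end aux

/-- Lemma 4.1: boundedness of the iteration and the quantitative
`limsup(‖w_{n+1}-w_n‖ - ‖z_{n+1}-z_n‖) ≤ 0`. -/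
theorem mPPA_bounded_and_asymptotic
    {H : Type*} [NormedAddCommGroup H] [InnerProductSpace ℝ H] [CompleteSpace H]
    (T : H → Set H) (hT : IsMaximalMonotoneOp T)
    (J : ℝ → H → H) (hJ : IsResolventFamilyOf J T)
    (s : H) (hsS : (0:H) ∈ T s)
    (u : H) (lam gam del cs : ℕ → ℝ) (e : ℕ → H) (z w : ℕ → H)
    (hlam01 : ∀ n, lam n ∈ Set.Ioo (0:ℝ) 1)
    (hgam01 : ∀ n, gam n ∈ Set.Ioo (0:ℝ) 1)
    (hdel01 : ∀ n, del n ∈ Set.Ioo (0:ℝ) 1)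
    (hsum1 : ∀ n, lam n + gam n + del n = 1)
    (hcs0 : ∀ n, 0 < cs n)
    (hmPPA : ∀ n, z (n+1) = lam n • u + gam n • z n + del n • J (cs n) (z n) + e n)
    (a c : ℕ) (ha : 0 < a) (hc : 0 < c)
    (ℓ Γ E : ℕ → ℕ) (hℓ : Monotone ℓ) (hΓ : Monotone Γ) (hE : Monotone E)
    (Q1 : ∀ k n : ℕ, ℓ k ≤ n → lam n ≤ 1 / ((k:ℝ)+1))
    (Q3 : ∀ m : ℕ, 1 / (a:ℝ) ≤ gam m ∧ gam m ≤ 1 - 1 / (a:ℝ))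
    (Q4 : ∀ n, 1 / (c:ℝ) ≤ cs n)
    (Q5 : ∀ k n : ℕ, Γ k ≤ n → |cs (n+1) - cs n| ≤ 1 / ((k:ℝ)+1))
    (Q6 : ∀ k n : ℕ, ∑ i ∈ Finset.Icc (E k + 1) (E k + n), ‖e i‖ ≤ 1 / ((k:ℝ)+1))
    (N₁ N₂ N₃ : ℕ)
    (hN₁ : ‖u‖ ≤ (N₁ : ℝ))
    (hN₂ : (∑ i ∈ Finset.range (E 0 + 1), ‖e i‖) + 1 ≤ (N₂ : ℝ))
    (hN₃u : ‖u - s‖ ≤ (N₃ : ℝ)) (hN₃z : ‖z 0 - s‖ ≤ (N₃ : ℝ))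
    (hw : ∀ n, z (n+1) = gam n • z n + (1 - gam n) • w n) :
    (∀ n, ‖z n - s‖ ≤ ((N₂ + N₃ : ℕ) : ℝ)) ∧
    (∀ n, ‖w n - s‖ ≤ ((2*a*(N₂+N₃) : ℕ) : ℝ)) ∧
    ∀ k n : ℕ, nuFun ℓ Γ E a c (N₂+N₃) N₁ N₃ k ≤ n →
      ‖w (n+1) - w n‖ - ‖z (n+1) - z n‖ ≤ 1 / ((k:ℝ)+1) := by

  obtain ⟨hmono, -⟩ := hT
  have ha' : (1:ℝ) ≤ (a:ℝ) := by exact_mod_cast ha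
  have hc' : (1:ℝ) ≤ (c:ℝ) := by exact_mod_cast hc
  have hβ : ∀ n, 1/(a:ℝ) ≤ 1 - gam n := fun n => by linarith [(Q3 n).2]
  have hβpos : ∀ n, (0:ℝ) < 1 - gam n := fun n =>
    lt_of_lt_of_le (by positivity) (hβ n)
  have hainv : ∀ n, (1 - gam n)⁻¹ ≤ (a:ℝ) := by
    intro n
    have h1 : (1/(a:ℝ))⁻¹ = (a:ℝ) := by rw [one_div, inv_inv]
    calc (1 - gam n)⁻¹ ≤ (1/(a:ℝ))⁻¹ := by
          apply inv_anti₀ (div_pos one_pos (by linarith)) (hβ n)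
      _ = (a:ℝ) := h1
  have hainvpos : ∀ n, (0:ℝ) < (1 - gam n)⁻¹ := fun n => inv_pos.mpr (hβpos n)
  -- J at fixed point / nonexpansiveness towards s
  have hJs : ∀ n x, ‖J (cs n) x - s‖ ≤ ‖x - s‖ := by
    intro n x
    calc ‖J (cs n) x - s‖ = ‖J (cs n) x - J (cs n) s‖ := by
          rw [resolvent_fix hmono hJ hsS (hcs0 n)]
      _ ≤ ‖x - s‖ := resolvent_nonexp hmono hJ (hcs0 n) x s
  -- bound on partial sums of ‖e‖
  have hesum : ∀ n, ∑ i ∈ Finset.range n, ‖e i‖ ≤ (N₂:ℝ) := by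
    intro n
    have hnn : ∀ (m : ℕ), (0:ℝ) ≤ ∑ i ∈ Finset.range m, ‖e i‖ :=
      fun m => Finset.sum_nonneg fun i _ => norm_nonneg _
    rcases le_or_gt n (E 0 + 1) with h | h
    · calc ∑ i ∈ Finset.range n, ‖e i‖
          ≤ ∑ i ∈ Finset.range (E 0 + 1), ‖e i‖ :=
            Finset.sum_le_sum_of_subset_of_nonneg (Finset.range_subset_range.mpr h)
              (fun i _ _ => norm_nonneg _)
        _ ≤ (N₂:ℝ) := by linarith
    · obtain ⟨m, rfl⟩ : ∃ m, n = m + 1 := ⟨n - 1, by omega⟩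
      have hsplit : ∑ i ∈ Finset.range (m+1), ‖e i‖
          = ∑ i ∈ Finset.range (E 0 + 1), ‖e i‖
            + ∑ i ∈ Finset.Ico (E 0 + 1) (m+1), ‖e i‖ := by
        rw [Finset.range_eq_Ico, Finset.range_eq_Ico]
        exact (Finset.sum_Ico_consecutive (fun i => ‖e i‖) (Nat.zero_le _) h.le).symm
      have hIco : Finset.Ico (E 0 + 1) (m + 1)
          = Finset.Icc (E 0 + 1) (E 0 + (m - E 0)) := by
        have h1 : E 0 + (m - E 0) = m := by omega
        rw [h1, Finset.Ico_add_one_right_eq_Icc]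
      have hQ := Q6 0 (m - E 0)
      simp only [Nat.cast_zero] at hQ
      rw [hsplit, hIco]
      linarith
  -- part 1 : boundedness of z
  have hzb : ∀ n, ‖z n - s‖ ≤ (N₃:ℝ) + ∑ i ∈ Finset.range n, ‖e i‖ := by
    intro n
    induction n with
    | zero => simpa using hN₃z
    | succ n ih =>
      have key : z (n+1) - s
          = lam n • (u - s) + gam n • (z n - s) + del n • (J (cs n) (z n) - s) + e n := by
        have h1 : lam n = 1 - gam n - del n := by linarith [hsum1 n]
        rw [hmPPA n, h1]; module
      have hnorm : ‖z (n+1) - s‖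
          ≤ lam n * ‖u - s‖ + gam n * ‖z n - s‖ + del n * ‖J (cs n) (z n) - s‖ + ‖e n‖ := by
        rw [key]
        calc ‖lam n • (u - s) + gam n • (z n - s) + del n • (J (cs n) (z n) - s) + e n‖
            ≤ ‖lam n • (u - s) + gam n • (z n - s) + del n • (J (cs n) (z n) - s)‖ + ‖e n‖ :=
              norm_add_le _ _
          _ ≤ ‖lam n • (u - s) + gam n • (z n - s)‖ + ‖del n • (J (cs n) (z n) - s)‖ + ‖e n‖ := by
              linarith [norm_add_le (lam n • (u - s) + gam n • (z n - s))
                (del n • (J (cs n) (z n) - s))]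
          _ ≤ ‖lam n • (u - s)‖ + ‖gam n • (z n - s)‖ + ‖del n • (J (cs n) (z n) - s)‖ + ‖e n‖ := by
              linarith [norm_add_le (lam n • (u - s)) (gam n • (z n - s))]
          _ = lam n * ‖u - s‖ + gam n * ‖z n - s‖ + del n * ‖J (cs n) (z n) - s‖ + ‖e n‖ := by
              rw [norm_smul, norm_smul, norm_smul, Real.norm_eq_abs, Real.norm_eq_abs,
                Real.norm_eq_abs, abs_of_pos (hlam01 n).1, abs_of_pos (hgam01 n).1,
                abs_of_pos (hdel01 n).1]
      have hJb := hJs n (z n)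
      have hS : (0:ℝ) ≤ ∑ i ∈ Finset.range n, ‖e i‖ :=
        Finset.sum_nonneg fun i _ => norm_nonneg _
      have hsum : ∑ i ∈ Finset.range (n+1), ‖e i‖ = (∑ i ∈ Finset.range n, ‖e i‖) + ‖e n‖ :=
        Finset.sum_range_succ _ _
      rw [hsum]
      have h01l := hlam01 n; have h01g := hgam01 n; have h01d := hdel01 n
      have hs1 := hsum1 n
      nlinarith [h01g.1.le, h01d.1.le, h01l.1.le, hJb, ih, hN₃u]
  have part1 : ∀ n, ‖z n - s‖ ≤ ((N₂ + N₃ : ℕ) : ℝ) := by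
    intro n
    have := hzb n
    have := hesum n
    push_cast
    linarith
  -- part 2 : boundedness of w
  have part2 : ∀ n, ‖w n - s‖ ≤ ((2*a*(N₂+N₃) : ℕ) : ℝ) := by
    intro n
    have hkey : (1 - gam n) • (w n - s) = (z (n+1) - s) - gam n • (z n - s) := by
      rw [hw n]; module
    have h1 : (1 - gam n) * ‖w n - s‖ ≤ ‖z (n+1) - s‖ + gam n * ‖z n - s‖ := by
      calc (1 - gam n) * ‖w n - s‖ = ‖(1 - gam n) • (w n - s)‖ := by
            rw [norm_smul, Real.norm_eq_abs, abs_of_pos (hβpos n)]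
        _ = ‖(z (n+1) - s) - gam n • (z n - s)‖ := by rw [hkey]
        _ ≤ ‖z (n+1) - s‖ + ‖gam n • (z n - s)‖ := norm_sub_le _ _
        _ = ‖z (n+1) - s‖ + gam n * ‖z n - s‖ := by
            rw [norm_smul, Real.norm_eq_abs, abs_of_pos (hgam01 n).1]
      -- done
    have h2 := part1 (n+1)
    have h3 := part1 n
    have h4 : (1 - gam n) * ‖w n - s‖ ≤ 2 * ((N₂+N₃:ℕ):ℝ) := by
      nlinarith [(hgam01 n).1.le, (hgam01 n).2.le, norm_nonneg (z n - s)]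
    have h5 := hβ n
    have h6 : (0:ℝ) < (a:ℝ) := by linarith
    have h7 : ‖w n - s‖ ≤ 2 * (a:ℝ) * ((N₂+N₃:ℕ):ℝ) := by
      have h8 : (1/(a:ℝ)) * ‖w n - s‖ ≤ (1 - gam n) * ‖w n - s‖ := by
        apply mul_le_mul_of_nonneg_right h5 (norm_nonneg _)
      rw [div_mul_eq_mul_div, one_mul, div_le_iff₀ h6] at h8
      nlinarith
    push_cast at h7 ⊢
    linarith
  refine ⟨part1, part2, ?_⟩
  -- part 3
  intro k n hn
  set N₀ : ℕ := N₂ + N₃ with hN₀def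
  set K1 : ℕ := 10*a*(N₀+N₁+N₃)*(k+1) with hK1
  set K2 : ℕ := 10*a*c*N₀*(k+1) with hK2
  set K3 : ℕ := 5*a*(k+1) with hK3
  have hnΓ : Γ K2 ≤ n := le_trans (le_max_left _ _) hn
  have hnℓ : ℓ K1 ≤ n := le_trans (le_trans (le_max_left _ _) (le_max_right _ _)) hn
  have hnE : E K3 + 1 ≤ n := le_trans (le_trans (le_max_right _ _) (le_max_right _ _)) hn
  -- single error term bound
  have heb : ∀ m : ℕ, E K3 + 1 ≤ m → ‖e m‖ ≤ 1/((K3:ℝ)+1) := by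
    intro m hm
    have hQ := Q6 K3 (m - E K3)
    have hmem : m ∈ Finset.Icc (E K3 + 1) (E K3 + (m - E K3)) := by
      rw [Finset.mem_Icc]; omega
    calc ‖e m‖ ≤ ∑ i ∈ Finset.Icc (E K3 + 1) (E K3 + (m - E K3)), ‖e i‖ :=
          Finset.single_le_sum (fun i _ => norm_nonneg _) hmem
      _ ≤ 1/((K3:ℝ)+1) := hQ
  -- α and the w formula
  set α : ℕ → ℝ := fun m => lam m * (1 - gam m)⁻¹ with hα
  have hα01 : ∀ m, 0 < α m ∧ α m < 1 := by
    intro m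
    constructor
    · exact mul_pos (hlam01 m).1 (hainvpos m)
    · rw [hα]
      have hlt : lam m < 1 - gam m := by linarith [(hdel01 m).1, hsum1 m]
      calc lam m * (1 - gam m)⁻¹ < (1 - gam m) * (1 - gam m)⁻¹ :=
            mul_lt_mul_of_pos_right hlt (hainvpos m)
        _ = 1 := mul_inv_cancel₀ (hβpos m).ne'
  have hwf : ∀ m, w m = α m • u + (1 - α m) • J (cs m) (z m) + (1 - gam m)⁻¹ • e m := by
    intro m
    have h12 : (1 - gam m) • w m = lam m • u + del m • J (cs m) (z m) + e m := by
      have h2 : gam m • z m + (1 - gam m) • w m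
          = lam m • u + gam m • z m + del m • J (cs m) (z m) + e m := by
        rw [← hw m, hmPPA m]
      have h3 : (1 - gam m) • w m
          = (gam m • z m + (1 - gam m) • w m) - gam m • z m := by module
      rw [h3, h2]; module
    have hld : del m = 1 - gam m - lam m := by linarith [hsum1 m]
    have hwm : w m = (1 - gam m)⁻¹ • ((1 - gam m) • w m) := by
      rw [smul_smul, inv_mul_cancel₀ (hβpos m).ne', one_smul]
    rw [hwm, h12, hld, hα]
    match_scalars <;> field_simp [(hβpos m).ne']
  have hdiff : w (n+1) - w n
      = (α (n+1) - α n) • (u - J (cs n) (z n))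
        + (1 - α (n+1)) • (J (cs (n+1)) (z (n+1)) - J (cs n) (z n))
        + (1 - gam (n+1))⁻¹ • e (n+1) - (1 - gam n)⁻¹ • e n := by
    rw [hwf (n+1), hwf n]; module
  -- norm bounds
  have hB1 : ‖u - J (cs n) (z n)‖ ≤ (N₃:ℝ) + (N₀:ℝ) := by
    calc ‖u - J (cs n) (z n)‖ = ‖(u - s) - (J (cs n) (z n) - s)‖ := by congr 1; abel
      _ ≤ ‖u - s‖ + ‖J (cs n) (z n) - s‖ := norm_sub_le _ _
      _ ≤ (N₃:ℝ) + (N₀:ℝ) := by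
          have := le_trans (hJs n (z n)) (part1 n)
          push_cast at this ⊢
          linarith
  have hzJ : ‖z n - J (cs n) (z n)‖ ≤ 2*(N₀:ℝ) := by
    calc ‖z n - J (cs n) (z n)‖ = ‖(z n - s) - (J (cs n) (z n) - s)‖ := by congr 1; abel
      _ ≤ ‖z n - s‖ + ‖J (cs n) (z n) - s‖ := norm_sub_le _ _
      _ ≤ 2*(N₀:ℝ) := by
          have h1 := le_trans (hJs n (z n)) (part1 n)
          have h2 := part1 n
          push_cast at h1 h2 ⊢
          linarith
  have hB2 : ‖J (cs (n+1)) (z (n+1)) - J (cs n) (z n)‖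
      ≤ ‖z (n+1) - z n‖ + (c:ℝ) * |cs (n+1) - cs n| * (2*(N₀:ℝ)) := by
    have t1 : ‖J (cs (n+1)) (z (n+1)) - J (cs (n+1)) (z n)‖ ≤ ‖z (n+1) - z n‖ :=
      resolvent_nonexp hmono hJ (hcs0 (n+1)) _ _
    have t2 : ‖J (cs (n+1)) (z n) - J (cs n) (z n)‖
        ≤ |cs n - cs (n+1)| / cs n * ‖z n - J (cs n) (z n)‖ :=
      resolvent_diff hmono hJ (hcs0 (n+1)) (hcs0 n) (z n)
    have hcsinv : 1 / cs n ≤ (c:ℝ) := by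
      have h1 := Q4 n
      have hcpos : (0:ℝ) < (c:ℝ) := by linarith
      rw [div_le_iff₀ (hcs0 n)]
      calc (1:ℝ) = (c:ℝ) * (1/(c:ℝ)) := by field_simp
        _ ≤ (c:ℝ) * cs n := by
            apply mul_le_mul_of_nonneg_left h1 hcpos.le
    have t3 : |cs n - cs (n+1)| / cs n * ‖z n - J (cs n) (z n)‖
        ≤ (c:ℝ) * |cs (n+1) - cs n| * (2*(N₀:ℝ)) := by
      rw [abs_sub_comm, div_eq_mul_one_div]
      have habs : (0:ℝ) ≤ |cs (n+1) - cs n| := abs_nonneg _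
      have h1d : (0:ℝ) ≤ 1 / cs n := (div_pos one_pos (hcs0 n)).le
      calc |cs (n+1) - cs n| * (1/cs n) * ‖z n - J (cs n) (z n)‖
          ≤ |cs (n+1) - cs n| * (c:ℝ) * (2*(N₀:ℝ)) := by
            apply mul_le_mul
            · exact mul_le_mul_of_nonneg_left hcsinv habs
            · exact hzJ
            · exact norm_nonneg _
            · positivity
        _ = (c:ℝ) * |cs (n+1) - cs n| * (2*(N₀:ℝ)) := by ring
    calc ‖J (cs (n+1)) (z (n+1)) - J (cs n) (z n)‖
        ≤ ‖J (cs (n+1)) (z (n+1)) - J (cs (n+1)) (z n)‖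
          + ‖J (cs (n+1)) (z n) - J (cs n) (z n)‖ := by
          have := norm_sub_le_norm_sub_add_norm_sub
            (J (cs (n+1)) (z (n+1))) (J (cs (n+1)) (z n)) (J (cs n) (z n))
          linarith
      _ ≤ ‖z (n+1) - z n‖ + (c:ℝ) * |cs (n+1) - cs n| * (2*(N₀:ℝ)) := by
          linarith [le_trans t2 t3]
  -- the main norm estimate
  have hstep : ‖w (n+1) - w n‖
      ≤ |α (n+1) - α n| * ((N₃:ℝ) + (N₀:ℝ))
        + (‖z (n+1) - z n‖ + (c:ℝ) * |cs (n+1) - cs n| * (2*(N₀:ℝ)))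
        + (a:ℝ) * ‖e (n+1)‖ + (a:ℝ) * ‖e n‖ := by
    rw [hdiff]
    set A := (α (n+1) - α n) • (u - J (cs n) (z n)) with hA
    set B := (1 - α (n+1)) • (J (cs (n+1)) (z (n+1)) - J (cs n) (z n)) with hB
    set C := (1 - gam (n+1))⁻¹ • e (n+1) with hC
    set D := (1 - gam n)⁻¹ • e n with hD
    have h4 : ‖A + B + C - D‖ ≤ ‖A‖ + ‖B‖ + ‖C‖ + ‖D‖ := by
      calc ‖A + B + C - D‖ ≤ ‖A + B + C‖ + ‖D‖ := norm_sub_le _ _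
        _ ≤ ‖A + B‖ + ‖C‖ + ‖D‖ := by linarith [norm_add_le (A + B) C]
        _ ≤ ‖A‖ + ‖B‖ + ‖C‖ + ‖D‖ := by linarith [norm_add_le A B]
    have hAn : ‖A‖ ≤ |α (n+1) - α n| * ((N₃:ℝ) + (N₀:ℝ)) := by
      rw [hA, norm_smul, Real.norm_eq_abs]
      exact mul_le_mul_of_nonneg_left hB1 (abs_nonneg _)
    have hBn : ‖B‖ ≤ ‖z (n+1) - z n‖ + (c:ℝ) * |cs (n+1) - cs n| * (2*(N₀:ℝ)) := by
      rw [hB, norm_smul, Real.norm_eq_abs,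
        abs_of_pos (by linarith [(hα01 (n+1)).2] : (0:ℝ) < 1 - α (n+1))]
      calc (1 - α (n+1)) * ‖J (cs (n+1)) (z (n+1)) - J (cs n) (z n)‖
          ≤ 1 * ‖J (cs (n+1)) (z (n+1)) - J (cs n) (z n)‖ := by
            apply mul_le_mul_of_nonneg_right _ (norm_nonneg _)
            linarith [(hα01 (n+1)).1]
        _ = ‖J (cs (n+1)) (z (n+1)) - J (cs n) (z n)‖ := one_mul _
        _ ≤ _ := hB2
    have hCn : ‖C‖ ≤ (a:ℝ) * ‖e (n+1)‖ := by
      rw [hC, norm_smul, Real.norm_eq_abs, abs_of_pos (hainvpos (n+1))]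
      exact mul_le_mul_of_nonneg_right (hainv (n+1)) (norm_nonneg _)
    have hDn : ‖D‖ ≤ (a:ℝ) * ‖e n‖ := by
      rw [hD, norm_smul, Real.norm_eq_abs, abs_of_pos (hainvpos n)]
      exact mul_le_mul_of_nonneg_right (hainv n) (norm_nonneg _)
    linarith
  -- quantitative bounds
  have hlamn : lam n ≤ 1/((K1:ℝ)+1) := Q1 K1 n hnℓ
  have hlamn1 : lam (n+1) ≤ 1/((K1:ℝ)+1) := Q1 K1 (n+1) (le_trans hnℓ (Nat.le_succ n))
  have hcsd : |cs (n+1) - cs n| ≤ 1/((K2:ℝ)+1) := Q5 K2 n hnΓ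
  have hen : ‖e n‖ ≤ 1/((K3:ℝ)+1) := heb n hnE
  have hen1 : ‖e (n+1)‖ ≤ 1/((K3:ℝ)+1) := heb (n+1) (le_trans hnE (Nat.le_succ n))
  have hαd : |α (n+1) - α n| ≤ (a:ℝ) * (lam (n+1) + lam n) := by
    have h1 : α (n+1) ≤ (a:ℝ) * lam (n+1) := by
      show lam (n+1) * (1 - gam (n+1))⁻¹ ≤ (a:ℝ) * lam (n+1)
      rw [mul_comm]
      exact mul_le_mul_of_nonneg_right (hainv (n+1)) (hlam01 (n+1)).1.le
    have h2 : α n ≤ (a:ℝ) * lam n := by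
      show lam n * (1 - gam n)⁻¹ ≤ (a:ℝ) * lam n
      rw [mul_comm]
      exact mul_le_mul_of_nonneg_right (hainv n) (hlam01 n).1.le
    have h3 : |α (n+1) - α n| ≤ α (n+1) + α n := by
      rw [abs_sub_le_iff]
      constructor <;> nlinarith [(hα01 n).1, (hα01 (n+1)).1]
    nlinarith
  -- numeric facts
  have hk1 : (0:ℝ) < (k:ℝ)+1 := by positivity
  have hN₂1 : (1:ℝ) ≤ (N₂:ℝ) := by
    have : (0:ℝ) ≤ ∑ i ∈ Finset.range (E 0 + 1), ‖e i‖ :=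
      Finset.sum_nonneg fun i _ => norm_nonneg _
    linarith
  have hN₀1 : (1:ℝ) ≤ (N₀:ℝ) := by
    rw [hN₀def]; push_cast
    have : (0:ℝ) ≤ (N₃:ℝ) := Nat.cast_nonneg _
    linarith
  have hN₃0 : (0:ℝ) ≤ (N₃:ℝ) := Nat.cast_nonneg _
  have hN₁0 : (0:ℝ) ≤ (N₁:ℝ) := Nat.cast_nonneg _
  have hK1c : ((K1:ℝ)) = 10*(a:ℝ)*((N₀:ℝ)+(N₁:ℝ)+(N₃:ℝ))*((k:ℝ)+1) := by
    rw [hK1]; push_cast; ring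
  have hK2c : ((K2:ℝ)) = 10*(a:ℝ)*(c:ℝ)*(N₀:ℝ)*((k:ℝ)+1) := by
    rw [hK2]; push_cast; ring
  have hK3c : ((K3:ℝ)) = 5*(a:ℝ)*((k:ℝ)+1) := by
    rw [hK3]; push_cast; ring
  have hT1 : (a:ℝ) * (lam (n+1) + lam n) * ((N₃:ℝ) + (N₀:ℝ)) ≤ 1/(5*((k:ℝ)+1)) := by
    have h1 : lam (n+1) + lam n ≤ 2/((K1:ℝ)+1) := by
      rw [show (2:ℝ)/((K1:ℝ)+1) = 1/((K1:ℝ)+1) + 1/((K1:ℝ)+1) by ring]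
      linarith
    have hK1pos : (0:ℝ) < (K1:ℝ)+1 := by positivity
    have h2 : (a:ℝ) * (lam (n+1) + lam n) * ((N₃:ℝ) + (N₀:ℝ))
        ≤ (a:ℝ) * (2/((K1:ℝ)+1)) * ((N₃:ℝ) + (N₀:ℝ)) := by
      apply mul_le_mul_of_nonneg_right _ (by linarith)
      apply mul_le_mul_of_nonneg_left h1 (by linarith)
    have h3 : (a:ℝ) * (2/((K1:ℝ)+1)) * ((N₃:ℝ) + (N₀:ℝ)) ≤ 1/(5*((k:ℝ)+1)) := by
      rw [show (a:ℝ) * (2/((K1:ℝ)+1)) * ((N₃:ℝ)+(N₀:ℝ))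
          = (a:ℝ)*2*((N₃:ℝ)+(N₀:ℝ))/((K1:ℝ)+1) by ring]
      rw [div_le_div_iff₀ hK1pos (by positivity), hK1c]
      nlinarith [mul_nonneg (mul_nonneg (by linarith : (0:ℝ) ≤ (a:ℝ)) hN₁0) hk1.le]
    linarith
  have hT2 : (c:ℝ) * |cs (n+1) - cs n| * (2*(N₀:ℝ)) ≤ 1/(5*((k:ℝ)+1)) := by
    have hK2pos : (0:ℝ) < (K2:ℝ)+1 := by positivity
    have h2 : (c:ℝ) * |cs (n+1) - cs n| * (2*(N₀:ℝ))
        ≤ (c:ℝ) * (1/((K2:ℝ)+1)) * (2*(N₀:ℝ)) := by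
      apply mul_le_mul_of_nonneg_right _ (by linarith)
      apply mul_le_mul_of_nonneg_left hcsd (by linarith)
    have h3 : (c:ℝ) * (1/((K2:ℝ)+1)) * (2*(N₀:ℝ)) ≤ 1/(5*((k:ℝ)+1)) := by
      rw [show (c:ℝ) * (1/((K2:ℝ)+1)) * (2*(N₀:ℝ))
          = (c:ℝ)*2*(N₀:ℝ)/((K2:ℝ)+1) by ring]
      rw [div_le_div_iff₀ hK2pos (by positivity), hK2c]
      nlinarith [mul_nonneg (mul_nonneg (mul_nonneg (by linarith : (0:ℝ) ≤ (c:ℝ))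
        (by linarith : (0:ℝ) ≤ (N₀:ℝ))) hk1.le)
        (by linarith : (0:ℝ) ≤ (a:ℝ) - 1)]
    linarith
  have hT3 : (a:ℝ) * ‖e (n+1)‖ + (a:ℝ) * ‖e n‖ ≤ 2/(5*((k:ℝ)+1)) := by
    have hK3pos : (0:ℝ) < (K3:ℝ)+1 := by positivity
    have h2 : (a:ℝ) * ‖e (n+1)‖ + (a:ℝ) * ‖e n‖ ≤ 2*(a:ℝ)/((K3:ℝ)+1) := by
      have h21 : (a:ℝ) * ‖e (n+1)‖ ≤ (a:ℝ) * (1/((K3:ℝ)+1)) :=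
        mul_le_mul_of_nonneg_left hen1 (by linarith)
      have h22 : (a:ℝ) * ‖e n‖ ≤ (a:ℝ) * (1/((K3:ℝ)+1)) :=
        mul_le_mul_of_nonneg_left hen (by linarith)
      calc (a:ℝ) * ‖e (n+1)‖ + (a:ℝ) * ‖e n‖ ≤ (a:ℝ)*(1/((K3:ℝ)+1)) + (a:ℝ)*(1/((K3:ℝ)+1)) := by
            linarith
        _ = 2*(a:ℝ)/((K3:ℝ)+1) := by ring
    have h3 : 2*(a:ℝ)/((K3:ℝ)+1) ≤ 2/(5*((k:ℝ)+1)) := by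
      rw [div_le_div_iff₀ hK3pos (by positivity), hK3c]
      nlinarith
    linarith
  -- put it all together
  have hfinal : ‖w (n+1) - w n‖ - ‖z (n+1) - z n‖
      ≤ 1/(5*((k:ℝ)+1)) + 1/(5*((k:ℝ)+1)) + 2/(5*((k:ℝ)+1)) := by
    have hr : (0:ℝ) ≤ (N₃:ℝ) + (N₀:ℝ) := by positivity
    have hαN : |α (n+1) - α n| * ((N₃:ℝ) + (N₀:ℝ))
        ≤ (a:ℝ) * (lam (n+1) + lam n) * ((N₃:ℝ) + (N₀:ℝ)) :=
      mul_le_mul_of_nonneg_right hαd hr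
    linarith [hstep, hT1, hT2, hT3]
  have hlast : 1/(5*((k:ℝ)+1)) + 1/(5*((k:ℝ)+1)) + 2/(5*((k:ℝ)+1)) ≤ 1/((k:ℝ)+1) := by
    rw [show 1/(5*((k:ℝ)+1)) + 1/(5*((k:ℝ)+1)) + 2/(5*((k:ℝ)+1)) = 4/(5*((k:ℝ)+1)) by ring]
    rw [div_le_div_iff₀ (by positivity) hk1]
    nlinarith
  linarith
end
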